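/- Let β be a positive real number. Then for every p ∈ (0,1], the Hausdorff triplet (respectively quartet) distance and the parametric triplet (respectively quartet) distance d^(p) are equivalent when restricted to pairs of rooted (respectively unrooted) phylogenies (T1,T2) over the same taxon set satisfying |U(T1,T2)| ≤ β·(|D(T1,T2)| + |R1(T1,T2)| + |R2(T1,T2)|): there exist constants c1, c2 > 0 (depending only on p and β) such that c1·d^(p)(T1,T2) ≤ d_Haus(T1,T2) ≤ c2·d^(p)(T1,T2) for all such pairs. -/

import Mathlib

open Finset

attribute [local instance] Classical.propDecidable

/-- A rooted phylogenetic tree over the taxon set `Fin n`, encoded by its hierarchy of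
clusters: for each node of the tree, the set of leaves descending from that node.
The conditions say that the whole leaf set and all singletons are clusters, the empty
set is not a cluster, and that the family is laminar.  Such families correspond exactly
to rooted phylogenies in which every internal node has at least two children. -/
structure RTree (n : ℕ) where
  clusters : Finset (Finset (Fin n))
  univ_mem : Finset.univ ∈ clusters
  singleton_mem : ∀ x : Fin n, {x} ∈ clusters
  empty_not_mem : ∅ ∉ clusters
  laminar : ∀ C ∈ clusters, ∀ D ∈ clusters, C ⊆ D ∨ D ⊆ C ∨ C ∩ D = ∅

/-- All triplets (3-element subsets) of `Fin n`. -/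
def triplets (n : ℕ) : Finset (Finset (Fin n)) :=
  Finset.powersetCard 3 Finset.univ

/-- The cluster family of the restriction `T|X`, for a rooted tree with cluster
family `F`: the nonempty intersections of clusters with `X`. -/
noncomputable def famRestrict {n : ℕ} (F : Finset (Finset (Fin n))) (X : Finset (Fin n)) :
    Finset (Finset (Fin n)) :=
  (F.image (· ∩ X)).filter (· ≠ ∅)

/-- A triplet `X` is resolved in a rooted tree with cluster family `F` iff the
restriction `T|X` is fully resolved, equivalently iff some cluster contains exactly
two of the three elements of `X`. -/
def famResolved {n : ℕ} (F : Finset (Finset (Fin n))) (X : Finset (Fin n)) : Prop :=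
  ∃ C ∈ F, (C ∩ X).card = 2

/-- Triplets resolved, identically, in both trees. -/
noncomputable def famSetS {n : ℕ} (F G : Finset (Finset (Fin n))) :
    Finset (Finset (Fin n)) :=
  (triplets n).filter fun X =>
    famResolved F X ∧ famResolved G X ∧ famRestrict F X = famRestrict G X

/-- Triplets resolved, differently, in both trees. -/
noncomputable def famSetD {n : ℕ} (F G : Finset (Finset (Fin n))) :
    Finset (Finset (Fin n)) :=
  (triplets n).filter fun X =>
    famResolved F X ∧ famResolved G X ∧ famRestrict F X ≠ famRestrict G X

/-- Triplets resolved in the first tree but not in the second. -/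
noncomputable def famSetR1 {n : ℕ} (F G : Finset (Finset (Fin n))) :
    Finset (Finset (Fin n)) :=
  (triplets n).filter fun X => famResolved F X ∧ ¬ famResolved G X

/-- Triplets resolved in the second tree but not in the first. -/
noncomputable def famSetR2 {n : ℕ} (F G : Finset (Finset (Fin n))) :
    Finset (Finset (Fin n)) :=
  (triplets n).filter fun X => famResolved G X ∧ ¬ famResolved F X

/-- Triplets unresolved in both trees. -/
noncomputable def famSetU {n : ℕ} (F G : Finset (Finset (Fin n))) :
    Finset (Finset (Fin n)) :=
  (triplets n).filter fun X => ¬ famResolved F X ∧ ¬ famResolved G X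

/-- The parametric triplet distance, at the level of cluster families. -/
noncomputable def famPdist {n : ℕ} (p : ℝ) (F G : Finset (Finset (Fin n))) : ℝ :=
  ((famSetD F G).card : ℝ) +
    p * (((famSetR1 F G).card : ℝ) + ((famSetR2 F G).card : ℝ))

namespace RTree

variable {n : ℕ}

/-- The cluster family of the restriction `T|X`. -/
noncomputable def restrict (T : RTree n) (X : Finset (Fin n)) : Finset (Finset (Fin n)) :=
  famRestrict T.clusters X

/-- The triplet `X` is resolved in `T`, i.e. `T|X` is fully resolved. -/
def Resolved (T : RTree n) (X : Finset (Fin n)) : Prop :=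
  famResolved T.clusters X

/-- A rooted phylogeny is fully resolved (all internal nodes have exactly two
children) iff every triplet is resolved in it. -/
def FullyResolved (T : RTree n) : Prop :=
  ∀ X ∈ triplets n, T.Resolved X

noncomputable def setS (T₁ T₂ : RTree n) : Finset (Finset (Fin n)) :=
  famSetS T₁.clusters T₂.clusters

noncomputable def setD (T₁ T₂ : RTree n) : Finset (Finset (Fin n)) :=
  famSetD T₁.clusters T₂.clusters

noncomputable def setR1 (T₁ T₂ : RTree n) : Finset (Finset (Fin n)) :=
  famSetR1 T₁.clusters T₂.clusters

noncomputable def setR2 (T₁ T₂ : RTree n) : Finset (Finset (Fin n)) :=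
  famSetR2 T₁.clusters T₂.clusters

noncomputable def setU (T₁ T₂ : RTree n) : Finset (Finset (Fin n)) :=
  famSetU T₁.clusters T₂.clusters

/-- The parametric triplet distance `d⁽ᵖ⁾(T₁,T₂)`. -/
noncomputable def pdist (p : ℝ) (T₁ T₂ : RTree n) : ℝ :=
  famPdist p T₁.clusters T₂.clusters

theorem clusters_injective : Function.Injective (clusters (n := n)) := by
  rintro ⟨s₁, _, _, _, _⟩ ⟨s₂, _, _, _, _⟩ h
  simp only [mk.injEq] at h ⊢
  exact h

noncomputable instance : Fintype (RTree n) :=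
  Fintype.ofInjective clusters clusters_injective

end RTree

/-- An unrooted phylogenetic tree over the taxon set `Fin n`, encoded by its split
system: the collection of all sets of leaves lying on one side of some edge of the
tree.  By the splits-equivalence (Buneman) theorem, the families satisfying these
conditions (all trivial splits present, closure under complementation, pairwise
compatibility) correspond exactly to unrooted phylogenies in which every internal
node has degree at least three. -/
structure UTree (n : ℕ) where
  splits : Finset (Finset (Fin n))
  empty_not_mem : ∅ ∉ splits
  trivial_mem : ∀ x : Fin n, ({x} : Finset (Fin n)) = Finset.univ ∨ {x} ∈ splits
  compl_mem : ∀ A ∈ splits, Finset.univ \ A ∈ splits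
  compat : ∀ A ∈ splits, ∀ B ∈ splits, A ⊆ B ∨ B ⊆ A ∨ A ∩ B = ∅ ∨ A ∪ B = Finset.univ

/-- All quartets (4-element subsets) of `Fin n`. -/
def quartets (n : ℕ) : Finset (Finset (Fin n)) :=
  Finset.powersetCard 4 Finset.univ

/-- The split system of the restriction `T|X`, for an unrooted tree with split
system `F`: the proper nonempty intersections of split sides with `X`. -/
noncomputable def famRestrictU {n : ℕ} (F : Finset (Finset (Fin n))) (X : Finset (Fin n)) :
    Finset (Finset (Fin n)) :=
  (F.image (· ∩ X)).filter fun A => A ≠ ∅ ∧ A ≠ X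

/-- A quartet `X` is resolved in an unrooted tree with split system `F` iff the
restriction `T|X` is fully resolved, equivalently iff some split side contains
exactly two of the four elements of `X`. -/
def famResolvedU {n : ℕ} (F : Finset (Finset (Fin n))) (X : Finset (Fin n)) : Prop :=
  ∃ A ∈ F, (A ∩ X).card = 2

/-- Quartets resolved, identically, in both trees. -/
noncomputable def famSetSU {n : ℕ} (F G : Finset (Finset (Fin n))) :
    Finset (Finset (Fin n)) :=
  (quartets n).filter fun X =>
    famResolvedU F X ∧ famResolvedU G X ∧ famRestrictU F X = famRestrictU G X

/-- Quartets resolved, differently, in both trees. -/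
noncomputable def famSetDU {n : ℕ} (F G : Finset (Finset (Fin n))) :
    Finset (Finset (Fin n)) :=
  (quartets n).filter fun X =>
    famResolvedU F X ∧ famResolvedU G X ∧ famRestrictU F X ≠ famRestrictU G X

/-- Quartets resolved in the first tree but not in the second. -/
noncomputable def famSetR1U {n : ℕ} (F G : Finset (Finset (Fin n))) :
    Finset (Finset (Fin n)) :=
  (quartets n).filter fun X => famResolvedU F X ∧ ¬ famResolvedU G X

/-- Quartets resolved in the second tree but not in the first. -/
noncomputable def famSetR2U {n : ℕ} (F G : Finset (Finset (Fin n))) :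
    Finset (Finset (Fin n)) :=
  (quartets n).filter fun X => famResolvedU G X ∧ ¬ famResolvedU F X

/-- Quartets unresolved in both trees. -/
noncomputable def famSetUU {n : ℕ} (F G : Finset (Finset (Fin n))) :
    Finset (Finset (Fin n)) :=
  (quartets n).filter fun X => ¬ famResolvedU F X ∧ ¬ famResolvedU G X

/-- The parametric quartet distance, at the level of split systems. -/
noncomputable def famPdistU {n : ℕ} (p : ℝ) (F G : Finset (Finset (Fin n))) : ℝ :=
  ((famSetDU F G).card : ℝ) +
    p * (((famSetR1U F G).card : ℝ) + ((famSetR2U F G).card : ℝ))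

namespace UTree

variable {n : ℕ}

/-- The split system of the restriction `T|X`. -/
noncomputable def restrict (T : UTree n) (X : Finset (Fin n)) : Finset (Finset (Fin n)) :=
  famRestrictU T.splits X

/-- The quartet `X` is resolved in `T`, i.e. `T|X` is fully resolved. -/
def Resolved (T : UTree n) (X : Finset (Fin n)) : Prop :=
  famResolvedU T.splits X

/-- An unrooted phylogeny is fully resolved (all internal nodes have degree exactly
three) iff every quartet is resolved in it. -/
def FullyResolved (T : UTree n) : Prop :=
  ∀ X ∈ quartets n, T.Resolved X

noncomputable def setS (T₁ T₂ : UTree n) : Finset (Finset (Fin n)) :=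
  famSetSU T₁.splits T₂.splits

noncomputable def setD (T₁ T₂ : UTree n) : Finset (Finset (Fin n)) :=
  famSetDU T₁.splits T₂.splits

noncomputable def setR1 (T₁ T₂ : UTree n) : Finset (Finset (Fin n)) :=
  famSetR1U T₁.splits T₂.splits

noncomputable def setR2 (T₁ T₂ : UTree n) : Finset (Finset (Fin n)) :=
  famSetR2U T₁.splits T₂.splits

noncomputable def setU (T₁ T₂ : UTree n) : Finset (Finset (Fin n)) :=
  famSetUU T₁.splits T₂.splits

/-- The parametric quartet distance `d⁽ᵖ⁾(T₁,T₂)`. -/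
noncomputable def pdist (p : ℝ) (T₁ T₂ : UTree n) : ℝ :=
  famPdistU p T₁.splits T₂.splits

theorem splits_injective : Function.Injective (splits (n := n)) := by
  rintro ⟨s₁, _, _, _, _⟩ ⟨s₂, _, _, _, _⟩ h
  simp only [mk.injEq] at h ⊢
  exact h

noncomputable instance : Fintype (UTree n) :=
  Fintype.ofInjective splits splits_injective

end UTree

namespace RTree

variable {n : ℕ}

/-- The set `F(T)` of full refinements of `T`: the fully resolved trees from which
`T` can be obtained by contracting internal edges, i.e. whose cluster family
contains that of `T`. -/
def FullRef (T : RTree n) : Set (RTree n) :=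
  {t | t.FullyResolved ∧ T.clusters ⊆ t.clusters}

/-- The triplet distance between two (fully resolved) rooted trees: the number of
triplets resolved differently in the two trees. -/
noncomputable def tripletDist (T₁ T₂ : RTree n) : ℝ :=
  ((setD T₁ T₂).card : ℝ)

/-- The Hausdorff triplet distance between two rooted phylogenies. -/
noncomputable def dHaus (T₁ T₂ : RTree n) : ℝ :=
  max (⨆ t₁ : T₁.FullRef, ⨅ t₂ : T₂.FullRef, tripletDist t₁.1 t₂.1)
      (⨆ t₂ : T₂.FullRef, ⨅ t₁ : T₁.FullRef, tripletDist t₁.1 t₂.1)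

end RTree

namespace UTree

variable {n : ℕ}

/-- The set `F(T)` of full refinements of `T`: the fully resolved trees from which
`T` can be obtained by contracting internal edges, i.e. whose split system contains
that of `T`. -/
def FullRef (T : UTree n) : Set (UTree n) :=
  {t | t.FullyResolved ∧ T.splits ⊆ t.splits}

/-- The quartet distance between two (fully resolved) unrooted trees: the number of
quartets resolved differently in the two trees. -/
noncomputable def quartetDist (T₁ T₂ : UTree n) : ℝ :=
  ((setD T₁ T₂).card : ℝ)

/-- The Hausdorff quartet distance between two unrooted phylogenies. -/
noncomputable def dHaus (T₁ T₂ : UTree n) : ℝ :=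
  max (⨆ t₁ : T₁.FullRef, ⨅ t₂ : T₂.FullRef, quartetDist t₁.1 t₂.1)
      (⨆ t₂ : T₂.FullRef, ⨅ t₁ : T₁.FullRef, quartetDist t₁.1 t₂.1)

end UTree

section Dev
variable {n : ℕ}




/-- sup of a nonempty ⊆-chain of finsets is a member (and an upper bound). -/
lemma chain_sup_mem {α : Type*} [DecidableEq α] (S : Finset (Finset α)) (hne : S.Nonempty)
    (hch : ∀ D ∈ S, ∀ E ∈ S, D ⊆ E ∨ E ⊆ D) :
    S.sup id ∈ S := by
  obtain ⟨M, hM, hMmax⟩ := S.exists_max_image (fun D => D.card) hne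
  have hub : ∀ D ∈ S, D ⊆ M := by
    intro D hD
    rcases hch D hD M hM with h | h
    · exact h
    · exact (Finset.eq_of_subset_of_card_le h (hMmax D hD)).ge
  have : S.sup id = M := le_antisymm (Finset.sup_le hub) (Finset.le_sup (f := id) hM)
  rw [this]; exact hM

lemma subset_sup_of_mem {α : Type*} [DecidableEq α] (S : Finset (Finset α)) {D : Finset α}
    (hD : D ∈ S) : D ⊆ S.sup id := Finset.le_sup (f := id) hD

/-- A laminar cluster system on ground set `V`. -/
structure Lam (V : Finset (Fin n)) (L : Finset (Finset (Fin n))) : Prop where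
  top : V ∈ L
  sing : ∀ y ∈ V, ({y} : Finset (Fin n)) ∈ L
  nemp : ∅ ∉ L
  sub : ∀ C ∈ L, C ⊆ V
  lam : ∀ C ∈ L, ∀ D ∈ L, C ⊆ D ∨ D ⊆ C ∨ C ∩ D = ∅

lemma Lam.mem_nonempty {V L} (h : Lam (n := n) V L) {C} (hC : C ∈ L) : C.Nonempty := by
  rcases C.eq_empty_or_nonempty with rfl | h'
  · exact absurd hC h.nemp
  · exact h'

/-- the maximal proper subcluster of `C` containing `y` -/
noncomputable def part (L : Finset (Finset (Fin n))) (C : Finset (Fin n)) (y : Fin n) :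
    Finset (Fin n) :=
  (L.filter fun D => D ⊆ C ∧ D ≠ C ∧ y ∈ D).sup id

lemma part_spec {V L} (h : Lam (n := n) V L) {C : Finset (Fin n)} (hC : C ∈ L) {y : Fin n}
    (hy : y ∈ C) (h2 : 2 ≤ C.card) :
    part L C y ∈ L ∧ part L C y ⊆ C ∧ part L C y ≠ C ∧ y ∈ part L C y ∧
      ∀ D ∈ L, D ⊆ C → D ≠ C → y ∈ D → D ⊆ part L C y := by
  set S := L.filter fun D => D ⊆ C ∧ D ≠ C ∧ y ∈ D with hS
  have hyS : ({y} : Finset (Fin n)) ∈ S := by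
    rw [hS, Finset.mem_filter]
    refine ⟨h.sing y (h.sub C hC hy), Finset.singleton_subset_iff.2 hy, ?_, Finset.mem_singleton_self y⟩
    intro hcon
    rw [← hcon] at h2
    simp at h2
  have hchain : ∀ D ∈ S, ∀ E ∈ S, D ⊆ E ∨ E ⊆ D := by
    intro D hD E hE
    rw [hS, Finset.mem_filter] at hD hE
    rcases h.lam D hD.1 E hE.1 with h' | h' | h'
    · exact Or.inl h'
    · exact Or.inr h'
    · exfalso
      have : y ∈ D ∩ E := Finset.mem_inter.2 ⟨hD.2.2.2, hE.2.2.2⟩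
      rw [h'] at this; simpa using this
  have hmem : S.sup id ∈ S := chain_sup_mem S ⟨_, hyS⟩ hchain
  rw [hS, Finset.mem_filter] at hmem
  refine ⟨hmem.1, hmem.2.1, hmem.2.2.1, ?_, ?_⟩
  · have := subset_sup_of_mem S hyS
    exact this (Finset.mem_singleton_self y)
  · intro D hD h1 h2' h3
    exact subset_sup_of_mem S (by rw [hS, Finset.mem_filter]; exact ⟨hD, h1, h2', h3⟩)

noncomputable def children (L : Finset (Finset (Fin n))) (C : Finset (Fin n)) :
    Finset (Finset (Fin n)) :=
  C.image (part L C)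

lemma mem_children_of_mem {L C : _} {y : Fin n} (hy : y ∈ C) :
    part L C y ∈ children L C := Finset.mem_image_of_mem _ hy

lemma children_disj {V L} (h : Lam (n := n) V L) {C} (hC : C ∈ L) (h2 : 2 ≤ C.card)
    {Q Q'} (hQ : Q ∈ children L C) (hQ' : Q' ∈ children L C) : Q = Q' ∨ Q ∩ Q' = ∅ := by
  obtain ⟨y, hy, rfl⟩ := Finset.mem_image.1 hQ
  obtain ⟨y', hy', rfl⟩ := Finset.mem_image.1 hQ'
  obtain ⟨hm, hsub, hne, hmem, hmax⟩ := part_spec h hC hy h2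
  obtain ⟨hm', hsub', hne', hmem', hmax'⟩ := part_spec h hC hy' h2
  by_cases hd : part L C y ∩ part L C y' = ∅
  · exact Or.inr hd
  left
  rcases h.lam _ hm _ hm' with h' | h' | h'
  · exact Finset.Subset.antisymm h' (hmax _ hm' hsub' hne' (h' hmem))
  · exact Finset.Subset.antisymm (hmax' _ hm hsub hne (h' hmem')) h'
  · exact absurd h' hd

lemma part_eq_of_mem {V L} (h : Lam (n := n) V L) {C} (hC : C ∈ L) (h2 : 2 ≤ C.card)
    {y z : Fin n} (hy : y ∈ C) (hz : z ∈ part L C y) : part L C z = part L C y := by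
  have hzC : z ∈ C := (part_spec h hC hy h2).2.1 hz
  rcases children_disj h hC h2 (mem_children_of_mem hzC) (mem_children_of_mem hy) with h' | h'
  · exact h'
  · exfalso
    have : z ∈ part L C z ∩ part L C y :=
      Finset.mem_inter.2 ⟨(part_spec h hC hzC h2).2.2.2.1, hz⟩
    rw [h'] at this; simpa using this

lemma children_sup {V L} (h : Lam (n := n) V L) {C} (hC : C ∈ L) (h2 : 2 ≤ C.card) :
    (children L C).sup id = C := by
  apply le_antisymm
  · apply Finset.sup_le
    intro Q hQ
    obtain ⟨y, hy, rfl⟩ := Finset.mem_image.1 hQ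
    exact (part_spec h hC hy h2).2.1
  · intro x hx
    have := (part_spec h hC hx h2).2.2.2.1
    exact (subset_sup_of_mem _ (mem_children_of_mem hx)) this

lemma children_card_two {V L} (h : Lam (n := n) V L) {C} (hC : C ∈ L) (h2 : 2 ≤ C.card) :
    2 ≤ (children L C).card := by
  obtain ⟨y, hy⟩ := h.mem_nonempty hC
  have hne := (part_spec h hC hy h2).2.2.1
  have hsub := (part_spec h hC hy h2).2.1
  obtain ⟨z, hzC, hz⟩ := Finset.exists_of_ssubset (lt_of_le_of_ne hsub hne)
  have h1 : part L C y ∈ children L C := mem_children_of_mem hy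
  have h2' : part L C z ∈ children L C := mem_children_of_mem hzC
  have hne2 : part L C z ≠ part L C y := by
    intro hcon
    exact hz (hcon ▸ (part_spec h hC hzC h2).2.2.2.1)
  exact Finset.one_lt_card.2 ⟨_, h2', _, h1, hne2⟩

noncomputable def pref (L : Finset (Finset (Fin n))) (ord : Finset (Fin n) → ℕ)
    (C Q : Finset (Fin n)) : Finset (Fin n) :=
  ((children L C).filter fun Q' => ord Q' ≤ ord Q).sup id

noncomputable def refineL (L : Finset (Finset (Fin n))) (ord : Finset (Fin n) → ℕ) :
    Finset (Finset (Fin n)) :=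
  L ∪ (L.filter fun C => 2 ≤ C.card).biUnion fun C => (children L C).image (pref L ord C)

lemma mem_refineL_iff {L ord} {E : Finset (Fin n)} :
    E ∈ refineL L ord ↔ E ∈ L ∨ ∃ C ∈ L, 2 ≤ C.card ∧ ∃ Q ∈ children L C, E = pref L ord C Q := by
  simp only [refineL, Finset.mem_union, Finset.mem_biUnion, Finset.mem_filter, Finset.mem_image]
  constructor
  · rintro (h | ⟨C, ⟨hC, h2⟩, Q, hQ, rfl⟩)
    · exact Or.inl h
    · exact Or.inr ⟨C, hC, h2, Q, hQ, rfl⟩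
  · rintro (h | ⟨C, hC, h2, Q, hQ, rfl⟩)
    · exact Or.inl h
    · exact Or.inr ⟨C, ⟨hC, h2⟩, Q, hQ, rfl⟩

lemma subset_refineL {L ord} : L ⊆ refineL (n := n) L ord := Finset.subset_union_left

lemma mem_pref {L ord C Q} {x : Fin n} :
    x ∈ pref L ord C Q ↔ ∃ Q' ∈ children L C, ord Q' ≤ ord Q ∧ x ∈ Q' := by
  simp only [pref, Finset.mem_sup, Finset.mem_filter, id]
  tauto

lemma pref_subset {V L} (h : Lam (n := n) V L) {C} (hC : C ∈ L) (h2 : 2 ≤ C.card) {ord Q} :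
    pref L ord C Q ⊆ C := by
  intro x hx
  obtain ⟨Q', hQ', _, hxQ'⟩ := mem_pref.1 hx
  obtain ⟨y, hy, rfl⟩ := Finset.mem_image.1 hQ'
  exact (part_spec h hC hy h2).2.1 hxQ'

lemma child_subset_pref {L ord C} {Q Q' : Finset (Fin n)} (hQ' : Q' ∈ children L C)
    (hle : ord Q' ≤ ord Q) : Q' ⊆ pref L ord C Q :=
  fun x hx => mem_pref.2 ⟨Q', hQ', hle, hx⟩

lemma pref_nonempty {V L} (h : Lam (n := n) V L) {C} (hC : C ∈ L) (h2 : 2 ≤ C.card) {ord Q}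
    (hQ : Q ∈ children L C) : (pref L ord C Q).Nonempty := by
  obtain ⟨y, hy, rfl⟩ := Finset.mem_image.1 hQ
  exact ⟨y, child_subset_pref hQ le_rfl ((part_spec h hC hy h2).2.2.2.1)⟩

/-- a subcluster `D ⊊ C` of `L` lies inside a single child of `C` -/
lemma subcluster_child {V L} (h : Lam (n := n) V L) {C D} (hC : C ∈ L) (h2 : 2 ≤ C.card)
    (hD : D ∈ L) (hsub : D ⊆ C) (hne : D ≠ C) :
    ∃ Q ∈ children L C, D ⊆ Q := by
  obtain ⟨y, hy⟩ := h.mem_nonempty hD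
  exact ⟨part L C y, mem_children_of_mem (hsub hy),
    (part_spec h hC (hsub hy) h2).2.2.2.2 D hD hsub hne hy⟩

lemma child_pref_cases {V L} (h : Lam (n := n) V L) {C} (hC : C ∈ L) (h2 : 2 ≤ C.card)
    {ord Q Q'} (hQ' : Q' ∈ children L C) :
    Q' ⊆ pref L ord C Q ∨ Q' ∩ pref L ord C Q = ∅ := by
  by_cases hle : ord Q' ≤ ord Q
  · exact Or.inl (child_subset_pref hQ' hle)
  right
  rw [Finset.eq_empty_iff_forall_notMem]
  rintro x hx
  rw [Finset.mem_inter] at hx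
  obtain ⟨Q'', hQ'', hle'', hxQ''⟩ := mem_pref.1 hx.2
  rcases children_disj h hC h2 hQ' hQ'' with rfl | hdisj
  · exact hle (le_trans hle'' le_rfl)
  · have : x ∈ Q' ∩ Q'' := Finset.mem_inter.2 ⟨hx.1, hxQ''⟩
    rw [hdisj] at this; simp at this

lemma sub_pref_cases {V L} (h : Lam (n := n) V L) {C D} (hC : C ∈ L) (h2 : 2 ≤ C.card)
    (hD : D ∈ L) (hsub : D ⊆ C) (hne : D ≠ C) {ord Q} :
    D ⊆ pref L ord C Q ∨ D ∩ pref L ord C Q = ∅ := by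
  obtain ⟨Q', hQ', hDQ'⟩ := subcluster_child h hC h2 hD hsub hne
  rcases child_pref_cases h hC h2 (ord := ord) (Q := Q) hQ' with h' | h'
  · exact Or.inl (hDQ'.trans h')
  · right
    rw [Finset.eq_empty_iff_forall_notMem] at h' ⊢
    intro x hx
    rw [Finset.mem_inter] at hx
    exact h' x (Finset.mem_inter.2 ⟨hDQ' hx.1, hx.2⟩)

lemma pref_mono {L : Finset (Finset (Fin n))} {ord : Finset (Fin n) → ℕ} {C Q Q' : Finset (Fin n)}
    (hle : ord Q ≤ ord Q') : pref L ord C Q ⊆ pref L ord C Q' := by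
  intro x hx
  obtain ⟨Q'', hQ'', hle'', hx''⟩ := mem_pref.1 hx
  exact mem_pref.2 ⟨Q'', hQ'', le_trans hle'' hle, hx''⟩

lemma refineL_lam {V L} (h : Lam (n := n) V L) (ord : Finset (Fin n) → ℕ) :
    Lam V (refineL L ord) := by
  have hprefmem : ∀ C ∈ L, 2 ≤ C.card → ∀ Q ∈ children L C,
      pref L ord C Q ⊆ C ∧ (pref L ord C Q).Nonempty := by
    intro C hC h2 Q hQ
    exact ⟨pref_subset h hC h2, pref_nonempty h hC h2 hQ⟩
  constructor
  · exact subset_refineL h.top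
  · exact fun y hy => subset_refineL (h.sing y hy)
  · intro hcon
    rcases mem_refineL_iff.1 hcon with h' | ⟨C, hC, h2, Q, hQ, heq⟩
    · exact h.nemp h'
    · exact Finset.not_nonempty_empty (heq ▸ pref_nonempty h hC h2 hQ)
  · intro C hC
    rcases mem_refineL_iff.1 hC with h' | ⟨C', hC', h2, Q, hQ, rfl⟩
    · exact h.sub C h'
    · exact (pref_subset h hC' h2).trans (h.sub C' hC')
  · -- laminarity
    have key : ∀ C ∈ L, ∀ h2 : 2 ≤ C.card, ∀ Q ∈ children L C, ∀ D ∈ L,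
        pref L ord C Q ⊆ D ∨ D ⊆ pref L ord C Q ∨ pref L ord C Q ∩ D = ∅ := by
      intro C hC h2 Q hQ D hD
      rcases h.lam C hC D hD with h' | h' | h'
      · exact Or.inl ((pref_subset h hC h2).trans h')
      · by_cases hne : D = C
        · subst hne
          exact Or.inl (pref_subset h hC h2)
        · rcases sub_pref_cases h hC h2 hD h' hne (ord := ord) (Q := Q) with h'' | h''
          · exact Or.inr (Or.inl h'')
          · refine Or.inr (Or.inr ?_)
            rw [Finset.inter_comm]; exact h''
      · refine Or.inr (Or.inr ?_)
        rw [Finset.eq_empty_iff_forall_notMem] at h' ⊢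
        intro x hx
        rw [Finset.mem_inter] at hx
        exact h' x (Finset.mem_inter.2 ⟨pref_subset h hC h2 hx.1, hx.2⟩)
    intro A hA B hB
    rcases mem_refineL_iff.1 hA with hA' | ⟨C, hC, h2, Q, hQ, rfl⟩
    · rcases mem_refineL_iff.1 hB with hB' | ⟨C', hC', h2', Q', hQ', rfl⟩
      · exact h.lam A hA' B hB'
      · rcases key C' hC' h2' Q' hQ' A hA' with h' | h' | h'
        · exact Or.inr (Or.inl h')
        · exact Or.inl h'
        · refine Or.inr (Or.inr ?_)
          rw [Finset.inter_comm]; exact h'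
    · rcases mem_refineL_iff.1 hB with hB' | ⟨C', hC', h2', Q', hQ', rfl⟩
      · exact key C hC h2 Q hQ B hB'
      · -- two prefixes
        rcases h.lam C hC C' hC' with h' | h' | h'
        · by_cases hne : C = C'
          · subst hne
            -- nested prefixes
            rcases le_total (ord Q) (ord Q') with hle | hle
            · exact Or.inl (pref_mono hle)
            · exact Or.inr (Or.inl (pref_mono hle))
          · -- C ⊊ C' : pref C Q ⊆ C, use sub_pref_cases with D := C against C' prefix
            rcases sub_pref_cases h hC' h2' hC h' hne (ord := ord) (Q := Q') with h'' | h'' 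
            · exact Or.inl ((pref_subset h hC h2).trans h'')
            · refine Or.inr (Or.inr ?_)
              rw [Finset.eq_empty_iff_forall_notMem] at h'' ⊢
              intro x hx
              rw [Finset.mem_inter] at hx
              exact h'' x (Finset.mem_inter.2 ⟨pref_subset h hC h2 hx.1, hx.2⟩)
        · by_cases hne : C' = C
          · subst hne
            rcases le_total (ord Q) (ord Q') with hle | hle
            · exact Or.inl (pref_mono hle)
            · exact Or.inr (Or.inl (pref_mono hle))
          · rcases sub_pref_cases h hC h2 hC' h' hne (ord := ord) (Q := Q) with h'' | h''
            · exact Or.inr (Or.inl ((pref_subset h hC' h2').trans h''))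
            · refine Or.inr (Or.inr ?_)
              rw [Finset.eq_empty_iff_forall_notMem] at h'' ⊢
              intro x hx
              rw [Finset.mem_inter] at hx
              exact h'' x (Finset.mem_inter.2 ⟨pref_subset h hC' h2' hx.2, hx.1⟩)
        · refine Or.inr (Or.inr ?_)
          rw [Finset.eq_empty_iff_forall_notMem] at h' ⊢
          intro x hx
          rw [Finset.mem_inter] at hx
          exact h' x (Finset.mem_inter.2 ⟨pref_subset h hC h2 hx.1, pref_subset h hC' h2' hx.2⟩)

def Bin (L : Finset (Finset (Fin n))) : Prop :=
  ∀ C ∈ L, 2 ≤ C.card →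
    ∃ D ∈ L, ∃ E ∈ L, D.Nonempty ∧ E.Nonempty ∧ D ∩ E = ∅ ∧ D ∪ E = C

lemma children_subset_L {V L} (h : Lam (n := n) V L) {C} (hC : C ∈ L) (h2 : 2 ≤ C.card) :
    children L C ⊆ L := by
  intro Q hQ
  obtain ⟨y, hy, rfl⟩ := Finset.mem_image.1 hQ
  exact (part_spec h hC hy h2).1

section BinSec

variable {V : Finset (Fin n)} {L : Finset (Finset (Fin n))} {ord : Finset (Fin n) → ℕ}

/-- splitting a prefix with at least two children into a smaller prefix and its top child -/
lemma pref_split (h : Lam V L) (hord : Set.InjOn ord L) {C} (hC : C ∈ L) (h2 : 2 ≤ C.card)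
    {Q} (hQ : Q ∈ children L C)
    (hK : ∃ Q' ∈ (children L C).filter (fun Q'' => ord Q'' ≤ ord Q), Q' ≠ Q) :
    ∃ M' ∈ children L C, ord M' ≤ ord Q ∧ M' ≠ Q ∧
      pref L ord C Q = pref L ord C M' ∪ Q ∧ pref L ord C M' ∩ Q = ∅ := by
  set K := (children L C).filter (fun Q'' => ord Q'' ≤ ord Q) with hKdef
  obtain ⟨Q₀, hQ₀, hQ₀ne⟩ := hK
  have hQ₀e : Q₀ ∈ K.erase Q := Finset.mem_erase.2 ⟨hQ₀ne, hQ₀⟩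
  obtain ⟨M', hM', hM'max⟩ := (K.erase Q).exists_max_image ord ⟨Q₀, hQ₀e⟩
  have hM'K : M' ∈ K := Finset.mem_erase.1 hM' |>.2
  have hM'ch : M' ∈ children L C := (Finset.mem_filter.1 hM'K).1
  have hM'le : ord M' ≤ ord Q := (Finset.mem_filter.1 hM'K).2
  have hM'ne : M' ≠ Q := (Finset.mem_erase.1 hM').1
  refine ⟨M', hM'ch, hM'le, hM'ne, ?_, ?_⟩
  · have hfil : (children L C).filter (fun Q'' => ord Q'' ≤ ord M') = K.erase Q := by
      apply Finset.ext
      intro Q''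
      simp only [Finset.mem_filter, Finset.mem_erase, hKdef]
      constructor
      · rintro ⟨hch, hle⟩
        refine ⟨?_, hch, le_trans hle hM'le⟩
        rintro rfl
        have : ord M' = ord Q'' := le_antisymm hM'le hle
        exact hM'ne (hord (children_subset_L h hC h2 hM'ch)
          (children_subset_L h hC h2 hch) this)
      · rintro ⟨hne, hch, hle⟩
        exact ⟨hch, hM'max Q'' (Finset.mem_erase.2 ⟨hne, Finset.mem_filter.2 ⟨hch, hle⟩⟩)⟩
    have : pref L ord C Q = K.sup id := rfl
    rw [this]
    have hQK : Q ∈ K := Finset.mem_filter.2 ⟨hQ, le_rfl⟩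
    have : K = insert Q (K.erase Q) := (Finset.insert_erase hQK).symm
    rw [this, Finset.sup_insert]
    have : pref L ord C M' = (K.erase Q).sup id := by rw [pref, hfil]
    rw [this]
    ext x
    simp only [Finset.sup_insert, Finset.mem_union, id]
    constructor
    · rintro hx
      rcases Finset.mem_union.1 hx with hx | hx
      · exact Or.inr hx
      · exact Or.inl hx
    · rintro (hx | hx)
      · exact Finset.mem_union.2 (Or.inr hx)
      · exact Finset.mem_union.2 (Or.inl hx)
  · rw [Finset.eq_empty_iff_forall_notMem]
    intro x hx
    rw [Finset.mem_inter] at hx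
    obtain ⟨Q'', hQ'', hle'', hx''⟩ := mem_pref.1 hx.1
    have hQ''ne : Q'' ≠ Q := by
      rintro rfl
      have := le_antisymm (le_trans hle'' hM'le) (le_trans hle'' hM'le)
      -- ord Q'' ≤ ord M' ≤ ord Q'' gives ord Q'' = ord M'… derive contradiction via inj
      have h1 : ord Q'' ≤ ord M' := hle''
      have h2' : ord M' ≤ ord Q'' := hM'le
      exact hM'ne (hord (children_subset_L h hC h2 hM'ch)
        (children_subset_L h hC h2 hQ'') (le_antisymm h2' h1))
    rcases children_disj h hC h2 hQ'' hQ with h' | h'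
    · exact hQ''ne h'
    · have : x ∈ Q'' ∩ Q := Finset.mem_inter.2 ⟨hx'', hx.2⟩
      rw [h'] at this; simp at this

lemma eq_pref_max (h : Lam V L) {C} (hC : C ∈ L) (h2 : 2 ≤ C.card) :
    ∃ Q ∈ children L C, C = pref L ord C Q ∧
      ∃ Q' ∈ (children L C).filter (fun Q'' => ord Q'' ≤ ord Q), Q' ≠ Q := by
  have hchne : (children L C).Nonempty := by
    have := children_card_two h hC h2
    exact Finset.card_pos.1 (by omega)
  obtain ⟨Q, hQ, hQmax⟩ := (children L C).exists_max_image ord hchne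
  refine ⟨Q, hQ, ?_, ?_⟩
  · have : (children L C).filter (fun Q'' => ord Q'' ≤ ord Q) = children L C :=
      Finset.filter_true_of_mem (fun Q'' h'' => hQmax Q'' h'')
    rw [pref, this, children_sup h hC h2]
  · have h2' := children_card_two h hC h2
    obtain ⟨Q', hQ', hne'⟩ := Finset.exists_mem_ne (s := children L C) (by omega) Q
    exact ⟨Q', Finset.mem_filter.2 ⟨hQ', hQmax Q' hQ'⟩, hne'⟩

lemma bin_mem_L (h : Lam V L) (hord : Set.InjOn ord L) {C} (hC : C ∈ L) (h2 : 2 ≤ C.card) :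
    ∃ D ∈ refineL L ord, ∃ E ∈ refineL L ord,
      D.Nonempty ∧ E.Nonempty ∧ D ∩ E = ∅ ∧ D ∪ E = C := by
  obtain ⟨Q, hQ, hCeq, hK⟩ := eq_pref_max (ord := ord) h hC h2
  obtain ⟨M', hM', _, _, hsplit, hdisj⟩ := pref_split h hord hC h2 hQ hK
  refine ⟨pref L ord C M', ?_, Q, ?_, ?_, ?_, hdisj, ?_⟩
  · exact mem_refineL_iff.2 (Or.inr ⟨C, hC, h2, M', hM', rfl⟩)
  · exact subset_refineL (children_subset_L h hC h2 hQ)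
  · exact pref_nonempty h hC h2 hM'
  · exact h.mem_nonempty (children_subset_L h hC h2 hQ)
  · rw [← hsplit, ← hCeq]

lemma refineL_bin (h : Lam V L) (hord : Set.InjOn ord L) : Bin (refineL L ord) := by
  intro E hE h2E
  rcases mem_refineL_iff.1 hE with hEL | ⟨C, hC, h2, Q, hQ, rfl⟩
  · exact bin_mem_L h hord hEL h2E
  · by_cases hK : ∃ Q' ∈ (children L C).filter (fun Q'' => ord Q'' ≤ ord Q), Q' ≠ Q
    · obtain ⟨M', hM', _, _, hsplit, hdisj⟩ := pref_split h hord hC h2 hQ hK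
      refine ⟨pref L ord C M', ?_, Q, ?_, ?_, ?_, hdisj, hsplit.symm⟩
      · exact mem_refineL_iff.2 (Or.inr ⟨C, hC, h2, M', hM', rfl⟩)
      · exact subset_refineL (children_subset_L h hC h2 hQ)
      · exact pref_nonempty h hC h2 hM'
      · exact h.mem_nonempty (children_subset_L h hC h2 hQ)
    · -- pref = Q ∈ L
      push_neg at hK
      have hKQ : (children L C).filter (fun Q'' => ord Q'' ≤ ord Q) = {Q} := by
        apply Finset.eq_singleton_iff_unique_mem.2
        exact ⟨Finset.mem_filter.2 ⟨hQ, le_rfl⟩, fun Q' hQ' => hK Q' hQ'⟩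
      have : pref L ord C Q = Q := by rw [pref, hKQ]; simp
      rw [this] at h2E ⊢
      exact bin_mem_L h hord (children_subset_L h hC h2 hQ) h2E

end BinSec

/-- binary systems resolve every subset of size ≥ 2 with a cluster meeting it in exactly 2 -/
lemma bin_resolves {V L} (h : Lam (n := n) V L) (hb : Bin L) {W : Finset (Fin n)}
    (hW : W ⊆ V) (h2 : 2 ≤ W.card) : ∃ C ∈ L, (C ∩ W).card = 2 := by
  set S := L.filter (fun C => 2 ≤ (C ∩ W).card) with hS
  have hVS : V ∈ S := by
    rw [hS, Finset.mem_filter]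
    refine ⟨h.top, ?_⟩
    rwa [Finset.inter_eq_right.2 hW]
  obtain ⟨C, hCS, hCmin⟩ := S.exists_min_image (fun C => C.card) ⟨V, hVS⟩
  rw [hS, Finset.mem_filter] at hCS
  obtain ⟨hCL, hC2⟩ := hCS
  have hCcard : 2 ≤ C.card := le_trans hC2 (Finset.card_le_card (Finset.inter_subset_left))
  obtain ⟨D, hD, E, hEm, hDne, hEne, hDE, hDEu⟩ := hb C hCL hCcard
  have hsplit : (D ∩ W) ∪ (E ∩ W) = C ∩ W := by
    rw [← Finset.union_inter_distrib_right, hDEu]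
  have hdisj : (D ∩ W) ∩ (E ∩ W) = ∅ := by
    rw [Finset.eq_empty_iff_forall_notMem]
    intro x hx
    simp only [Finset.mem_inter] at hx
    have : x ∈ D ∩ E := Finset.mem_inter.2 ⟨hx.1.1, hx.2.1⟩
    rw [hDE] at this; simp at this
  have hcardsum : (D ∩ W).card + (E ∩ W).card = (C ∩ W).card := by
    rw [← hsplit, Finset.card_union_of_disjoint (Finset.disjoint_iff_inter_eq_empty.2 hdisj)]
  have hDlt : ∀ X ∈ L, X ⊆ C → X ≠ C → (X ∩ W).card ≤ 1 := by
    intro X hX hsub hne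
    by_contra hcon
    push_neg at hcon
    have hXS : X ∈ S := Finset.mem_filter.2 ⟨hX, hcon⟩
    have := hCmin X hXS
    have : X = C := Finset.eq_of_subset_of_card_le hsub this
    exact hne this
  have hDC : D ⊆ C := hDEu ▸ Finset.subset_union_left
  have hEC : E ⊆ C := hDEu ▸ Finset.subset_union_right
  have hDneC : D ≠ C := by
    rintro rfl
    obtain ⟨x, hx⟩ := hEne
    have : x ∈ D ∩ E := Finset.mem_inter.2 ⟨hEC hx, hx⟩
    rw [hDE] at this; simp at this
  have hEneC : E ≠ C := by
    rintro rfl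
    obtain ⟨x, hx⟩ := hDne
    have : x ∈ D ∩ E := Finset.mem_inter.2 ⟨hx, hDC hx⟩
    rw [hDE] at this; simp at this
  have h1 := hDlt D hD hDC hDneC
  have h2' := hDlt E hEm hEC hEneC
  refine ⟨C, hCL, ?_⟩
  omega

lemma pref_inter {V L} (h : Lam (n := n) V L) {C'} (hC' : C' ∈ L) (h2 : 2 ≤ C'.card)
    {ord : Finset (Fin n) → ℕ} {Q W : Finset (Fin n)} :
    pref L ord C' Q ∩ W = (C' ∩ W).filter (fun x => ord (part L C' x) ≤ ord Q) := by
  ext x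
  simp only [Finset.mem_inter, Finset.mem_filter]
  constructor
  · rintro ⟨hxp, hxW⟩
    obtain ⟨Q'', hQ'', hle, hxQ''⟩ := mem_pref.1 hxp
    obtain ⟨y, hy, rfl⟩ := Finset.mem_image.1 hQ''
    have hxC' : x ∈ C' := (part_spec h hC' hy h2).2.1 hxQ''
    have := part_eq_of_mem h hC' h2 hy hxQ''
    exact ⟨⟨hxC', hxW⟩, this ▸ hle⟩
  · rintro ⟨⟨hxC', hxW⟩, hle⟩
    refine ⟨child_subset_pref (mem_children_of_mem hxC') hle ?_, hxW⟩
    exact (part_spec h hC' hxC' h2).2.2.2.1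

lemma minNode {V L} (h : Lam (n := n) V L) {W₀ : Finset (Fin n)} (hne : W₀.Nonempty)
    (hWV : W₀ ⊆ V) : ∃ C ∈ L, W₀ ⊆ C ∧ ∀ C' ∈ L, W₀ ⊆ C' → C ⊆ C' := by
  set S := L.filter (fun C => W₀ ⊆ C) with hS
  have hVS : V ∈ S := Finset.mem_filter.2 ⟨h.top, hWV⟩
  obtain ⟨C, hCS, hCmin⟩ := S.exists_min_image (fun C => C.card) ⟨V, hVS⟩
  rw [hS, Finset.mem_filter] at hCS
  refine ⟨C, hCS.1, hCS.2, ?_⟩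
  intro C' hC' hWC'
  rcases h.lam C hCS.1 C' hC' with h' | h' | h'
  · exact h'
  · have hle := hCmin C' (Finset.mem_filter.2 ⟨hC', hWC'⟩)
    exact (Finset.eq_of_subset_of_card_le h' hle).ge
  · exfalso
    obtain ⟨x, hx⟩ := hne
    have : x ∈ C ∩ C' := Finset.mem_inter.2 ⟨hCS.2 hx, hWC' hx⟩
    rw [h'] at this; simp at this

/-- Structure lemma: for an unresolved triplet/quartet `W` there is an "active node" `C`
and "active set" `W'` governing all exactly-2 intersections of prefix refinements. -/
lemma struct {V L} (h : Lam (n := n) V L) {W : Finset (Fin n)} (hWV : W ⊆ V)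
    (hcard : W.card = 3 ∨ W.card = 4)
    (hunres : ∀ C ∈ L, (C ∩ W).card ≠ 2) :
    ∃ C W' : Finset (Fin n), C ∈ L ∧ 2 ≤ C.card ∧ W' ⊆ C ∧ W' ⊆ W ∧
      (W'.card = 3 ∨ W' = W) ∧ 3 ≤ W'.card ∧ C ∩ W = W' ∧
      (∀ u ∈ W', part L C u ∩ W = {u}) ∧
      ∀ (ord : Finset (Fin n) → ℕ),
        (∀ E ∈ refineL L ord, (E ∩ W).card = 2 →
          E ∩ W ⊆ W' ∧ ∀ u ∈ E ∩ W, ∀ v ∈ W',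
            ord (part L C v) ≤ ord (part L C u) → v ∈ E ∩ W) ∧
        ∀ T ⊆ W', T.card = 2 →
          (∀ u ∈ T, ∀ v ∈ W', ord (part L C v) ≤ ord (part L C u) → v ∈ T) →
          ∃ E ∈ refineL L ord, E ∩ W = T := by
  have hW2 : 2 ≤ W.card := by omega
  have hWne : W.Nonempty := Finset.card_pos.1 (by omega)
  obtain ⟨C₄, hC₄, hWC₄, hmin₄⟩ := minNode h hWne hWV
  have h2C₄ : 2 ≤ C₄.card := le_trans hW2 (Finset.card_le_card hWC₄)
  -- the possible sizes of child ∩ W at the top node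
  have hpartW : ∀ w ∈ W, (part L C₄ w ∩ W).card = 1 ∨
      ((part L C₄ w ∩ W).card = 3 ∧ W.card = 4) := by
    intro w hw
    obtain ⟨hpL, hpsub, hpne, hpmem, _⟩ := part_spec h hC₄ (hWC₄ hw) h2C₄
    have h1 : 1 ≤ (part L C₄ w ∩ W).card :=
      Finset.card_pos.2 ⟨w, Finset.mem_inter.2 ⟨hpmem, hw⟩⟩
    have h2 : (part L C₄ w ∩ W).card ≠ 2 := hunres _ hpL
    have h3 : (part L C₄ w ∩ W).card ≤ W.card :=
      Finset.card_le_card (Finset.inter_subset_right)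
    have h4 : (part L C₄ w ∩ W).card ≠ W.card := by
      intro hcon
      have : part L C₄ w ∩ W = W := Finset.eq_of_subset_of_card_le
        (Finset.inter_subset_right) (le_of_eq hcon.symm)
      have hWp : W ⊆ part L C₄ w := by rw [← this]; exact Finset.inter_subset_left
      have := hmin₄ _ hpL hWp
      exact hpne (Finset.Subset.antisymm hpsub this)
    omega
  -- key first part: find C, W' with node-uniqueness property
  suffices hsuff : ∃ C W' : Finset (Fin n), C ∈ L ∧ 2 ≤ C.card ∧ W' ⊆ C ∧ W' ⊆ W ∧
      (W'.card = 3 ∨ W' = W) ∧ 3 ≤ W'.card ∧ C ∩ W = W' ∧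
      (∀ u ∈ W', part L C u ∩ W = {u}) ∧
      (∀ C' ∈ L, 2 ≤ C'.card → ∀ (ord : Finset (Fin n) → ℕ) (Q : Finset (Fin n)),
          (pref L ord C' Q ∩ W).card = 2 → C' = C) by
    obtain ⟨C, W', hCL, h2C, hW'C, hW'W, hW'3, hW'ge3, hCW, hparts, huniq⟩ := hsuff
    refine ⟨C, W', hCL, h2C, hW'C, hW'W, hW'3, hW'ge3, hCW, hparts, ?_⟩
    intro ord
    constructor
    · intro E hE hE2
      rcases mem_refineL_iff.1 hE with hEL | ⟨C', hC', h2', Q, hQ, rfl⟩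
      · exact absurd hE2 (hunres E hEL)
      · have hC'C : C' = C := huniq C' hC' h2' ord Q hE2
        subst hC'C
        have heq : pref L ord C' Q ∩ W =
            W'.filter (fun x => ord (part L C' x) ≤ ord Q) := by
          rw [pref_inter h hC' h2', hCW]
        constructor
        · rw [heq]; exact Finset.filter_subset _ _
        · intro u hu v hv hle
          rw [heq] at hu ⊢
          rw [Finset.mem_filter] at hu
          exact Finset.mem_filter.2 ⟨hv, le_trans hle hu.2⟩
    · intro T hTW' hT2 hdc
      have hTne : T.Nonempty := Finset.card_pos.1 (by omega)
      obtain ⟨u₁, hu₁, hu₁max⟩ := T.exists_max_image (fun x => ord (part L C x)) hTne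
      refine ⟨pref L ord C (part L C u₁), ?_, ?_⟩
      · exact mem_refineL_iff.2 (Or.inr ⟨C, hCL, h2C, part L C u₁,
          mem_children_of_mem (hW'C (hTW' hu₁)), rfl⟩)
      · rw [pref_inter h hCL h2C, hCW]
        ext x
        rw [Finset.mem_filter]
        constructor
        · rintro ⟨hxW', hxle⟩
          exact hdc u₁ hu₁ x hxW' hxle
        · intro hxT
          exact ⟨hTW' hxT, hu₁max x hxT⟩
  -- now the case analysis
  by_cases hcase : ∀ w ∈ W, (part L C₄ w ∩ W).card = 1
  · -- Case 1: all children meet W in one point; C := C₄, W' := W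
    have hparts : ∀ u ∈ W, part L C₄ u ∩ W = {u} := by
      intro u hu
      have h1 := hcase u hu
      obtain ⟨a, ha⟩ := Finset.card_eq_one.1 h1
      have : u ∈ part L C₄ u ∩ W := Finset.mem_inter.2
        ⟨(part_spec h hC₄ (hWC₄ hu) h2C₄).2.2.2.1, hu⟩
      rw [ha] at this ⊢
      rw [Finset.mem_singleton] at this
      rw [this]
    have hCW : C₄ ∩ W = W := Finset.inter_eq_right.2 hWC₄
    refine ⟨C₄, W, hC₄, h2C₄, hWC₄, Finset.Subset.refl W, Or.inr rfl, by omega, hCW,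
      hparts, ?_⟩
    intro C' hC' h2' ord Q hcard2
    by_contra hne'
    have hPsub : pref L ord C' Q ∩ W ⊆ C' ∩ W := by
      intro x hx
      rw [Finset.mem_inter] at hx ⊢
      exact ⟨pref_subset h hC' h2' hx.1, hx.2⟩
    have hC'W2 : 2 ≤ (C' ∩ W).card := hcard2 ▸ Finset.card_le_card hPsub
    have hC'W3 : 3 ≤ (C' ∩ W).card := by
      have := hunres C' hC'
      omega
    -- helper: if C' ∩ W inside one child of C', contradiction
    have allsame : ∀ Q₀ ∈ children L C', ¬ (C' ∩ W ⊆ Q₀) := by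
      intro Q₀ hQ₀ hsub
      obtain ⟨y, hy, rfl⟩ := Finset.mem_image.1 hQ₀
      have heq : pref L ord C' Q ∩ W =
          (C' ∩ W).filter (fun x => ord (part L C' y) ≤ ord Q) := by
        rw [pref_inter h hC' h2']
        apply Finset.filter_congr
        intro x hx
        have hxQ₀ : x ∈ part L C' y := hsub hx
        rw [part_eq_of_mem h hC' h2' hy hxQ₀]
      by_cases hc : ord (part L C' y) ≤ ord Q
      · rw [heq, Finset.filter_true_of_mem (fun x _ => hc)] at hcard2
        omega
      · rw [heq, Finset.filter_false_of_mem (fun x _ => hc)] at hcard2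
        simp at hcard2
    by_cases hfull : (C' ∩ W).card = W.card
    · have hWsubC' : W ⊆ C' := by
        have : C' ∩ W = W := Finset.eq_of_subset_of_card_le
          Finset.inter_subset_right (le_of_eq hfull.symm)
        rw [← this]; exact Finset.inter_subset_left
      have hCsub : C₄ ⊆ C' := hmin₄ C' hC' hWsubC'
      have hCssub : C₄ ≠ C' := fun hcon => hne' hcon.symm
      obtain ⟨Q₀, hQ₀, hsubQ₀⟩ := subcluster_child h hC' h2' hC₄ hCsub hCssub
      exact allsame Q₀ hQ₀ (fun x hx => hsubQ₀ (hWC₄ (Finset.mem_inter.1 hx).2))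
    · -- C' ∩ W is a proper subset of W of size ≥ 3, so W.card = 4 and C' ⊊ C₄
      have hle : (C' ∩ W).card ≤ W.card := Finset.card_le_card Finset.inter_subset_right
      have hC'W3' : (C' ∩ W).card = 3 := by omega
      have hW4 : W.card = 4 := by omega
      have hC'ne : (C' ∩ W).Nonempty := Finset.card_pos.1 (by omega)
      obtain ⟨w, hw⟩ := hC'ne
      rw [Finset.mem_inter] at hw
      have hsub : C' ⊆ C₄ := by
        rcases h.lam C' hC' C₄ hC₄ with h' | h' | h'
        · exact h'
        · exfalso
          have hWsubC' : W ⊆ C' := hWC₄.trans h'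
          have : C' ∩ W = W := Finset.inter_eq_right.2 hWsubC'
          rw [this] at hC'W3'; omega
        · exfalso
          have : w ∈ C' ∩ C₄ := Finset.mem_inter.2 ⟨hw.1, hWC₄ hw.2⟩
          rw [h'] at this; simp at this
      have hneC₄ : C' ≠ C₄ := by
        intro hcon
        rw [hcon, hCW] at hC'W3'; omega
      obtain ⟨Q₀, hQ₀, hsubQ₀⟩ := subcluster_child h hC₄ h2C₄ hC' hsub hneC₄
      obtain ⟨y, hy, rfl⟩ := Finset.mem_image.1 hQ₀
      have hwQ₀ : w ∈ part L C₄ y := hsubQ₀ hw.1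
      have : part L C₄ w = part L C₄ y := part_eq_of_mem h hC₄ h2C₄ hy hwQ₀
      have hcontra : (part L C₄ w ∩ W).card = 1 := hcase w hw.2
      have : 3 ≤ (part L C₄ w ∩ W).card := by
        rw [this]
        refine le_trans (le_of_eq hC'W3'.symm) (Finset.card_le_card ?_)
        intro x hx
        rw [Finset.mem_inter] at hx ⊢
        exact ⟨hsubQ₀ hx.1, hx.2⟩
      omega
  · -- Case 2: some child D₀ of C₄ meets W in 3 points (and W.card = 4)
    push_neg at hcase
    obtain ⟨w₀, hw₀W, hw₀⟩ := hcase
    have hD₀ : (part L C₄ w₀ ∩ W).card = 3 ∧ W.card = 4 := by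
      rcases hpartW w₀ hw₀W with h' | h'
      · exact absurd h' hw₀
      · exact h'
    set D₀ := part L C₄ w₀ with hD₀def
    set W₃ := D₀ ∩ W with hW₃def
    have hW₃W : W₃ ⊆ W := Finset.inter_subset_right
    have hW₃D₀ : W₃ ⊆ D₀ := Finset.inter_subset_left
    have hW₃3 : W₃.card = 3 := hD₀.1
    have hW4 : W.card = 4 := hD₀.2
    obtain ⟨hD₀L, hD₀sub, hD₀ne, hw₀D₀, hD₀max⟩ := part_spec h hC₄ (hWC₄ hw₀W) h2C₄
    have hW₃ne : W₃.Nonempty := Finset.card_pos.1 (by omega)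
    obtain ⟨C, hCL, hW₃C, hminC⟩ := minNode h hW₃ne ((hW₃W).trans hWV)
    have hCD₀ : C ⊆ D₀ := hminC D₀ hD₀L hW₃D₀
    have h2C : 2 ≤ C.card := le_trans (by omega) (Finset.card_le_card hW₃C)
    have hCW : C ∩ W = W₃ := by
      apply Finset.Subset.antisymm
      · intro x hx
        rw [Finset.mem_inter] at hx
        exact Finset.mem_inter.2 ⟨hCD₀ hx.1, hx.2⟩
      · intro x hx
        exact Finset.mem_inter.2 ⟨hW₃C hx, hW₃W hx⟩
    have hparts : ∀ u ∈ W₃, part L C u ∩ W = {u} := by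
      intro u hu
      have huC : u ∈ C := hW₃C hu
      obtain ⟨hpL, hpsub, hpne, hpmem, _⟩ := part_spec h hCL huC h2C
      have hsubW₃ : part L C u ∩ W ⊆ W₃ := by
        intro x hx
        rw [Finset.mem_inter] at hx
        exact Finset.mem_inter.2 ⟨hCD₀ (hpsub hx.1), hx.2⟩
      have hcard' : (part L C u ∩ W).card ≠ 2 := hunres _ hpL
      have h1 : 1 ≤ (part L C u ∩ W).card :=
        Finset.card_pos.2 ⟨u, Finset.mem_inter.2 ⟨hpmem, hW₃W hu⟩⟩
      have h3 : (part L C u ∩ W).card ≤ 3 := hW₃3 ▸ Finset.card_le_card hsubW₃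
      have hne3 : (part L C u ∩ W).card ≠ 3 := by
        intro hcon
        have heq : part L C u ∩ W = W₃ := Finset.eq_of_subset_of_card_le hsubW₃
          (by omega)
        have : W₃ ⊆ part L C u := by rw [← heq]; exact Finset.inter_subset_left
        have := hminC _ hpL this
        exact hpne (Finset.Subset.antisymm hpsub this)
      have hcard1 : (part L C u ∩ W).card = 1 := by omega
      obtain ⟨a, ha⟩ := Finset.card_eq_one.1 hcard1
      have : u ∈ part L C u ∩ W := Finset.mem_inter.2 ⟨hpmem, hW₃W hu⟩
      rw [ha] at this ⊢
      rw [Finset.mem_singleton] at this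
      rw [this]
    -- the fourth element d
    have hdiff : (W \ W₃).card = 1 := by
      rw [Finset.card_sdiff_of_subset hW₃W]; omega
    obtain ⟨d, hd⟩ := Finset.card_eq_one.1 hdiff
    have hdW : d ∈ W := by
      have : d ∈ W \ W₃ := hd ▸ Finset.mem_singleton_self d
      exact (Finset.mem_sdiff.1 this).1
    have hdW₃ : d ∉ W₃ := by
      have : d ∈ W \ W₃ := hd ▸ Finset.mem_singleton_self d
      exact (Finset.mem_sdiff.1 this).2
    have hWsplit : ∀ x ∈ W, x ∈ W₃ ∨ x = d := by
      intro x hx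
      by_cases h' : x ∈ W₃
      · exact Or.inl h'
      · right
        have : x ∈ W \ W₃ := Finset.mem_sdiff.2 ⟨hx, h'⟩
        rw [hd] at this
        exact Finset.mem_singleton.1 this
    refine ⟨C, W₃, hCL, h2C, hW₃C, hW₃W, Or.inl hW₃3, by omega, hCW, hparts, ?_⟩
    intro C' hC' h2' ord Q hcard2
    by_contra hne'
    have hPsub : pref L ord C' Q ∩ W ⊆ C' ∩ W := by
      intro x hx
      rw [Finset.mem_inter] at hx ⊢
      exact ⟨pref_subset h hC' h2' hx.1, hx.2⟩
    have hC'W2 : 2 ≤ (C' ∩ W).card := hcard2 ▸ Finset.card_le_card hPsub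
    have hC'W3 : 3 ≤ (C' ∩ W).card := by
      have := hunres C' hC'
      omega
    have allsame : ∀ Q₀ ∈ children L C', ¬ (C' ∩ W ⊆ Q₀) := by
      intro Q₀ hQ₀ hsub
      obtain ⟨y, hy, rfl⟩ := Finset.mem_image.1 hQ₀
      have heq : pref L ord C' Q ∩ W =
          (C' ∩ W).filter (fun x => ord (part L C' y) ≤ ord Q) := by
        rw [pref_inter h hC' h2']
        apply Finset.filter_congr
        intro x hx
        have hxQ₀ : x ∈ part L C' y := hsub hx
        rw [part_eq_of_mem h hC' h2' hy hxQ₀]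
      by_cases hc : ord (part L C' y) ≤ ord Q
      · rw [heq, Finset.filter_true_of_mem (fun x _ => hc)] at hcard2
        omega
      · rw [heq, Finset.filter_false_of_mem (fun x _ => hc)] at hcard2
        simp at hcard2
    by_cases hfull : (C' ∩ W).card = 4
    · have hWsubC' : W ⊆ C' := by
        have : C' ∩ W = W := Finset.eq_of_subset_of_card_le
          Finset.inter_subset_right (by omega)
        rw [← this]; exact Finset.inter_subset_left
      have hCsub : C₄ ⊆ C' := hmin₄ C' hC' hWsubC'
      by_cases hCeq : C₄ = C'
      · -- C' = C₄ : compute intersection explicitly, cards in {0,1,3,4}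
        subst hCeq
        have hC₄W : C₄ ∩ W = W := Finset.inter_eq_right.2 hWC₄
        have heq : pref L ord C₄ Q ∩ W =
            W.filter (fun x => ord (part L C₄ x) ≤ ord Q) := by
          rw [pref_inter h hC₄ h2C₄, hC₄W]
        have hpartsW : ∀ x ∈ W₃, part L C₄ x = D₀ := by
          intro x hx
          exact part_eq_of_mem h hC₄ h2C₄ (hWC₄ hw₀W) (hW₃D₀ hx)
        have hsplitfil : pref L ord C₄ Q ∩ W =
            (W₃.filter fun x => ord D₀ ≤ ord Q) ∪
            (({d} : Finset (Fin n)).filter fun x => ord (part L C₄ d) ≤ ord Q) := by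
          rw [heq]
          ext x
          simp only [Finset.mem_union, Finset.mem_filter, Finset.mem_singleton]
          constructor
          · rintro ⟨hxW, hxle⟩
            rcases hWsplit x hxW with hx3 | rfl
            · left; exact ⟨hx3, by rwa [hpartsW x hx3] at hxle⟩
            · right; exact ⟨rfl, hxle⟩
          · rintro (⟨hx3, hxle⟩ | ⟨rfl, hxle⟩)
            · exact ⟨hW₃W hx3, by rwa [hpartsW x hx3]⟩
            · exact ⟨hdW, hxle⟩
        have hdisj : Disjoint (W₃.filter fun x => ord D₀ ≤ ord Q)
            (({d} : Finset (Fin n)).filter fun x => ord (part L C₄ d) ≤ ord Q) := by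
          apply Finset.disjoint_left.2
          intro x hx hx'
          rw [Finset.mem_filter] at hx hx'
          rw [Finset.mem_singleton] at hx'
          exact hdW₃ (hx'.1 ▸ hx.1)
        rw [hsplitfil, Finset.card_union_of_disjoint hdisj] at hcard2
        have hA : (W₃.filter fun x => ord D₀ ≤ ord Q).card = 0 ∨
            (W₃.filter fun x => ord D₀ ≤ ord Q).card = 3 := by
          by_cases hc1 : ord D₀ ≤ ord Q
          · right; rw [Finset.filter_true_of_mem (fun x _ => hc1)]; exact hW₃3
          · left; rw [Finset.filter_false_of_mem (fun x _ => hc1)]; simp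
        have hB : (({d} : Finset (Fin n)).filter
            fun x => ord (part L C₄ d) ≤ ord Q).card ≤ 1 := by
          refine le_trans (Finset.card_le_card (Finset.filter_subset _ _)) ?_
          simp
        omega
      · obtain ⟨Q₀, hQ₀, hsubQ₀⟩ := subcluster_child h hC' h2' hC₄ hCsub hCeq
        exact allsame Q₀ hQ₀ (fun x hx => hsubQ₀ (hWC₄ (Finset.mem_inter.1 hx).2))
    · -- (C' ∩ W).card = 3
      have hle : (C' ∩ W).card ≤ W.card := Finset.card_le_card Finset.inter_subset_right
      have hC'W3' : (C' ∩ W).card = 3 := by omega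
      have hC'ne : (C' ∩ W).Nonempty := Finset.card_pos.1 (by omega)
      obtain ⟨w, hw⟩ := hC'ne
      rw [Finset.mem_inter] at hw
      have hsub : C' ⊆ C₄ := by
        rcases h.lam C' hC' C₄ hC₄ with h' | h' | h'
        · exact h'
        · exfalso
          have hWsubC' : W ⊆ C' := hWC₄.trans h'
          have : C' ∩ W = W := Finset.inter_eq_right.2 hWsubC'
          rw [this] at hC'W3'; omega
        · exfalso
          have : w ∈ C' ∩ C₄ := Finset.mem_inter.2 ⟨hw.1, hWC₄ hw.2⟩
          rw [h'] at this; simp at this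
      have hneC₄ : C' ≠ C₄ := by
        intro hcon
        rw [hcon, Finset.inter_eq_right.2 hWC₄] at hC'W3'; omega
      obtain ⟨Q₀, hQ₀, hsubQ₀⟩ := subcluster_child h hC₄ h2C₄ hC' hsub hneC₄
      obtain ⟨y, hy, rfl⟩ := Finset.mem_image.1 hQ₀
      have hwQ₀ : w ∈ part L C₄ y := hsubQ₀ hw.1
      have hpww : part L C₄ w = part L C₄ y := part_eq_of_mem h hC₄ h2C₄ hy hwQ₀
      have hQ₀W3 : 3 ≤ (part L C₄ w ∩ W).card := by
        rw [hpww]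
        refine le_trans (le_of_eq hC'W3'.symm) (Finset.card_le_card ?_)
        intro x hx
        rw [Finset.mem_inter] at hx ⊢
        exact ⟨hsubQ₀ hx.1, hx.2⟩
      have hQ₀3 : (part L C₄ w ∩ W).card = 3 := by
        rcases hpartW w hw.2 with h' | h'
        · omega
        · exact h'.1
      -- part L C₄ w = D₀ since two 3-subsets of a 4-set intersect
      have hinterne : (part L C₄ w ∩ W ∩ W₃).Nonempty := by
        by_contra hcon
        rw [Finset.not_nonempty_iff_eq_empty] at hcon
        have hun : (part L C₄ w ∩ W) ∪ W₃ ⊆ W :=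
          Finset.union_subset Finset.inter_subset_right hW₃W
        have := Finset.card_le_card hun
        rw [Finset.card_union_of_disjoint (Finset.disjoint_iff_inter_eq_empty.2 hcon)]
          at this
        omega
      obtain ⟨z, hz⟩ := hinterne
      rw [Finset.mem_inter, Finset.mem_inter] at hz
      have hQ₀D₀ : part L C₄ w = D₀ := by
        rcases children_disj h hC₄ h2C₄ (mem_children_of_mem (hWC₄ hw.2))
          (mem_children_of_mem (hWC₄ hw₀W)) with h' | h'
        · exact h'
        · exfalso
          have : z ∈ part L C₄ w ∩ part L C₄ w₀ :=
            Finset.mem_inter.2 ⟨hz.1.1, hW₃D₀ hz.2⟩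
          rw [h'] at this; simp at this
      have hC'WW₃ : C' ∩ W = W₃ := by
        apply Finset.eq_of_subset_of_card_le
        · intro x hx
          rw [Finset.mem_inter] at hx
          have : x ∈ part L C₄ w := hpww ▸ hsubQ₀ hx.1
          rw [hQ₀D₀] at this
          exact Finset.mem_inter.2 ⟨this, hx.2⟩
        · omega
      have hW₃C' : W₃ ⊆ C' := by
        rw [← hC'WW₃]; exact Finset.inter_subset_left
      have hCsubC' : C ⊆ C' := hminC C' hC' hW₃C'
      have hCneC' : C ≠ C' := fun hcon => hne' hcon.symm
      obtain ⟨Q₁, hQ₁, hsubQ₁⟩ := subcluster_child h hC' h2' hCL hCsubC' hCneC'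
      apply allsame Q₁ hQ₁
      rw [hC'WW₃]
      exact hW₃C.trans hsubQ₁

/-- downward-closed 2-subset of `W'` w.r.t. a key function -/
def dc2 (key : Fin n → ℕ) (W' T : Finset (Fin n)) : Prop :=
  T ⊆ W' ∧ T.card = 2 ∧ ∀ u ∈ T, ∀ v ∈ W', key v ≤ key u → v ∈ T

lemma dc2_exists {key : Fin n → ℕ} {W' : Finset (Fin n)}
    (hinj : ∀ u ∈ W', ∀ v ∈ W', key u = key v → u = v) (h3 : 3 ≤ W'.card) :
    ∃ T, dc2 key W' T := by
  have hne : W'.Nonempty := Finset.card_pos.1 (by omega)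
  obtain ⟨m1, hm1, hm1min⟩ := W'.exists_min_image key hne
  have hne2 : (W'.erase m1).Nonempty := by
    rw [← Finset.card_pos, Finset.card_erase_of_mem hm1]; omega
  obtain ⟨m2, hm2, hm2min⟩ := (W'.erase m1).exists_min_image key hne2
  have hm2W : m2 ∈ W' := Finset.mem_of_mem_erase hm2
  have hm12 : m1 ≠ m2 := fun hcon => (Finset.mem_erase.1 hm2).1 hcon.symm
  refine ⟨{m1, m2}, ?_, ?_, ?_⟩
  · intro x hx
    rcases Finset.mem_insert.1 hx with rfl | hx
    · exact hm1
    · rw [Finset.mem_singleton.1 hx]; exact hm2W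
  · rw [Finset.card_insert_of_notMem (by simp [hm12]), Finset.card_singleton]
  · intro u hu v hv hle
    rcases Finset.mem_insert.1 hu with rfl | hu
    · have : key u ≤ key v := hm1min v hv
      have : v = u := hinj v hv u hm1 (le_antisymm hle this)
      simp [this]
    · rw [Finset.mem_singleton] at hu
      subst hu
      by_cases hvm1 : v = m1
      · simp [hvm1]
      · have hv' : v ∈ W'.erase m1 := Finset.mem_erase.2 ⟨hvm1, hv⟩
        have : key u ≤ key v := hm2min v hv'
        have : v = u := hinj v hv u hm2W (le_antisymm hle this)
        simp [this]

lemma dc2_eq' {key : Fin n → ℕ} {W' : Finset (Fin n)}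
    (hinj : ∀ u ∈ W', ∀ v ∈ W', key u = key v → u = v) (h3 : 3 ≤ W'.card)
    {T T' : Finset (Fin n)}
    (hT : dc2 key W' T) (hT' : dc2 key W' T') : T = T' := by
  have hne : W'.Nonempty := Finset.card_pos.1 (by omega)
  obtain ⟨m1, hm1, hm1min⟩ := W'.exists_min_image key hne
  have hne2 : (W'.erase m1).Nonempty := by
    rw [← Finset.card_pos, Finset.card_erase_of_mem hm1]; omega
  obtain ⟨m2, hm2, hm2min⟩ := (W'.erase m1).exists_min_image key hne2
  have hm2W : m2 ∈ W' := Finset.mem_of_mem_erase hm2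
  have hm12 : m1 ≠ m2 := fun hcon => (Finset.mem_erase.1 hm2).1 hcon.symm
  have hcan : ∀ S, dc2 key W' S → S = {m1, m2} := by
    intro S hS
    obtain ⟨hSsub, hScard, hSdc⟩ := hS
    have hSne : S.Nonempty := Finset.card_pos.1 (by omega)
    obtain ⟨u, hu⟩ := hSne
    have hm1S : m1 ∈ S := hSdc u hu m1 hm1 (hm1min u (hSsub hu))
    have : (S.erase m1).Nonempty := by
      rw [← Finset.card_pos, Finset.card_erase_of_mem hm1S]; omega
    obtain ⟨u2, hu2⟩ := this
    have hu2S : u2 ∈ S := Finset.mem_of_mem_erase hu2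
    have hu2e : u2 ∈ W'.erase m1 :=
      Finset.mem_erase.2 ⟨(Finset.mem_erase.1 hu2).1, hSsub hu2S⟩
    have hm2S : m2 ∈ S := hSdc u2 hu2S m2 hm2W (hm2min u2 hu2e)
    apply (Finset.eq_of_subset_of_card_le ?_ ?_).symm
    · intro x hx
      rcases Finset.mem_insert.1 hx with rfl | hx
      · exact hm1S
      · rw [Finset.mem_singleton] at hx; subst hx; exact hm2S
    · rw [hScard, Finset.card_insert_of_notMem (by simp [hm12]), Finset.card_singleton]
  rw [hcan T hT, hcan T' hT']

noncomputable def botF (key : Fin n → ℕ) (W' : Finset (Fin n)) : Finset (Fin n) :=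
  if h : ∃ T, dc2 key W' T then h.choose else ∅

lemma dc2_botF {key : Fin n → ℕ} {W' : Finset (Fin n)}
    (hinj : ∀ u ∈ W', ∀ v ∈ W', key u = key v → u = v) (h3 : 3 ≤ W'.card) :
    dc2 key W' (botF key W') := by
  have h := dc2_exists hinj h3
  rw [botF, dif_pos h]
  exact h.choose_spec

lemma eq_botF {key : Fin n → ℕ} {W' T : Finset (Fin n)}
    (hinj : ∀ u ∈ W', ∀ v ∈ W', key u = key v → u = v) (h3 : 3 ≤ W'.card)
    (hT : dc2 key W' T) : T = botF key W' :=
  dc2_eq' hinj h3 hT (dc2_botF hinj h3)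

lemma dc2_congr {key key' : Fin n → ℕ} {W' T : Finset (Fin n)}
    (hagree : ∀ u ∈ W', key u = key' u) : dc2 key W' T → dc2 key' W' T := by
  rintro ⟨h1, h2, h3⟩
  exact ⟨h1, h2, fun u hu v hv hle =>
    h3 u hu v hv (by rw [hagree u (h1 hu), hagree v hv]; exact hle)⟩

lemma dc2_image {key : Fin n → ℕ} {W' T : Finset (Fin n)} (σ : Equiv.Perm (Fin n))
    (hσ : W'.image σ = W') (h : dc2 (fun u => key (σ u)) W' T) :
    dc2 key W' (T.image σ) := by
  obtain ⟨h1, h2, h3⟩ := h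
  refine ⟨?_, ?_, ?_⟩
  · intro x hx
    obtain ⟨u, hu, rfl⟩ := Finset.mem_image.1 hx
    rw [← hσ]
    exact Finset.mem_image_of_mem _ (h1 hu)
  · rw [Finset.card_image_of_injective _ σ.injective]; exact h2
  · intro u' hu' v' hv'
    obtain ⟨u, hu, rfl⟩ := Finset.mem_image.1 hu'
    have hv'W : v' ∈ W'.image σ := hσ.symm ▸ hv'
    obtain ⟨v, hv, rfl⟩ := Finset.mem_image.1 hv'W
    intro hle
    exact Finset.mem_image_of_mem _ (h3 u hu v hv hle)

lemma botF_image {key : Fin n → ℕ} {W' : Finset (Fin n)} (σ : Equiv.Perm (Fin n))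
    (hσ : W'.image σ = W')
    (hinj : ∀ u ∈ W', ∀ v ∈ W', key u = key v → u = v) (h3 : 3 ≤ W'.card) :
    (botF (fun u => key (σ u)) W').image σ = botF key W' := by
  have hinj' : ∀ u ∈ W', ∀ v ∈ W', key (σ u) = key (σ v) → u = v := by
    intro u hu v hv heq
    have hσu : σ u ∈ W' := by rw [← hσ]; exact Finset.mem_image_of_mem _ hu
    have hσv : σ v ∈ W' := by rw [← hσ]; exact Finset.mem_image_of_mem _ hv
    exact σ.injective (hinj _ hσu _ hσv heq)
  exact eq_botF hinj h3 (dc2_image σ hσ (dc2_botF hinj' h3))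

/-- abstract three-class pigeonhole bound -/
lemma three_class_bound {Ω : Type*} [Fintype Ω] [DecidableEq Ω] (P Q₁ Q₂ Q₃ : Ω → Prop)
    (hcover : ∀ π, Q₁ π ∨ Q₂ π ∨ Q₃ π)
    (h12 : ∀ π, ¬(Q₁ π ∧ Q₂ π)) (h13 : ∀ π, ¬(Q₁ π ∧ Q₃ π)) (h23 : ∀ π, ¬(Q₂ π ∧ Q₃ π))
    (e12 : Ω ≃ Ω) (he12 : ∀ π, Q₁ π ↔ Q₂ (e12 π))
    (e13 : Ω ≃ Ω) (he13 : ∀ π, Q₁ π ↔ Q₃ (e13 π))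
    (hPQ : ∀ π, P π → Q₁ π) :
    3 * (Finset.univ.filter P).card ≤ Fintype.card Ω := by
  classical
  have hc1 : (Finset.univ.filter P).card ≤ (Finset.univ.filter Q₁).card :=
    Finset.card_le_card (fun π hπ => Finset.mem_filter.2
      ⟨Finset.mem_univ _, hPQ π (Finset.mem_filter.1 hπ).2⟩)
  have hc12 : (Finset.univ.filter Q₁).card = (Finset.univ.filter Q₂).card := by
    apply Finset.card_bij (fun π _ => e12 π)
    · intro π hπ
      exact Finset.mem_filter.2 ⟨Finset.mem_univ _,
        (he12 π).1 (Finset.mem_filter.1 hπ).2⟩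
    · intro π _ π' _ heq
      exact e12.injective heq
    · intro π hπ
      refine ⟨e12.symm π, ?_, by simp⟩
      apply Finset.mem_filter.2
      refine ⟨Finset.mem_univ _, ?_⟩
      have := (Finset.mem_filter.1 hπ).2
      rw [← e12.apply_symm_apply π] at this
      exact (he12 (e12.symm π)).2 this
  have hc13 : (Finset.univ.filter Q₁).card = (Finset.univ.filter Q₃).card := by
    apply Finset.card_bij (fun π _ => e13 π)
    · intro π hπ
      exact Finset.mem_filter.2 ⟨Finset.mem_univ _,
        (he13 π).1 (Finset.mem_filter.1 hπ).2⟩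
    · intro π _ π' _ heq
      exact e13.injective heq
    · intro π hπ
      refine ⟨e13.symm π, ?_, by simp⟩
      apply Finset.mem_filter.2
      refine ⟨Finset.mem_univ _, ?_⟩
      have := (Finset.mem_filter.1 hπ).2
      rw [← e13.apply_symm_apply π] at this
      exact (he13 (e13.symm π)).2 this
  have hd12 : Disjoint (Finset.univ.filter Q₁) (Finset.univ.filter Q₂) := by
    rw [Finset.disjoint_left]
    intro π hπ1 hπ2
    exact h12 π ⟨(Finset.mem_filter.1 hπ1).2, (Finset.mem_filter.1 hπ2).2⟩
  have hd3 : Disjoint ((Finset.univ.filter Q₁) ∪ (Finset.univ.filter Q₂))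
      (Finset.univ.filter Q₃) := by
    rw [Finset.disjoint_left]
    intro π hπ hπ3
    rcases Finset.mem_union.1 hπ with h' | h'
    · exact h13 π ⟨(Finset.mem_filter.1 h').2, (Finset.mem_filter.1 hπ3).2⟩
    · exact h23 π ⟨(Finset.mem_filter.1 h').2, (Finset.mem_filter.1 hπ3).2⟩
  have hsum : (Finset.univ.filter Q₁).card + (Finset.univ.filter Q₂).card +
      (Finset.univ.filter Q₃).card ≤ Fintype.card Ω := by
    rw [← Finset.card_union_of_disjoint hd12, ← Finset.card_union_of_disjoint hd3,
      ← Finset.card_univ]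
    exact Finset.card_le_card (Finset.subset_univ _)
  omega

section Counting

lemma image_swap_invariant {S : Finset (Fin n)} {x y : Fin n} (hx : x ∈ S) (hy : y ∈ S) :
    S.image (Equiv.swap x y) = S := by
  apply Finset.eq_of_subset_of_card_le
  · intro z hz
    obtain ⟨w, hw, rfl⟩ := Finset.mem_image.1 hz
    by_cases h1 : w = x
    · subst h1; rw [Equiv.swap_apply_left]; exact hy
    by_cases h2 : w = y
    · subst h2; rw [Equiv.swap_apply_right]; exact hx
    · rw [Equiv.swap_apply_of_ne_of_ne h1 h2]; exact hw
  · rw [Finset.card_image_of_injective _ (Equiv.swap x y).injective]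

lemma image_swap_image (X : Finset (Fin n)) (x y : Fin n) :
    (X.image (Equiv.swap x y)).image (Equiv.swap x y) = X := by
  rw [Finset.image_image]
  have : (Equiv.swap x y) ∘ (Equiv.swap x y) = id := by
    funext u; simp [Equiv.swap_apply_self]
  rw [this, Finset.image_id]

lemma image_swap_sdiff (S T : Finset (Fin n)) (x y : Fin n) :
    (S \ T).image (Equiv.swap x y) = S.image (Equiv.swap x y) \ T.image (Equiv.swap x y) :=
  Finset.image_sdiff _ _ (Equiv.swap x y).injective

lemma image_swap_pair (a t x y : Fin n) :
    ({a, t} : Finset (Fin n)).image (Equiv.swap x y) =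
      {Equiv.swap x y a, Equiv.swap x y t} := by
  rw [Finset.image_insert, Finset.image_singleton]

noncomputable def ordOf (L : Finset (Finset (Fin n))) (e₀ : {x // x ∈ L} → ℕ)
    (π : Equiv.Perm {x // x ∈ L}) : Finset (Fin n) → ℕ :=
  fun D => if h : D ∈ L then e₀ (π ⟨D, h⟩) else 0

lemma ordOf_injOn {L : Finset (Finset (Fin n))} {e₀ : {x // x ∈ L} → ℕ}
    (he₀ : Function.Injective e₀) (π : Equiv.Perm {x // x ∈ L}) :
    Set.InjOn (ordOf L e₀ π) ↑L := by
  intro D hD D' hD' heq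
  rw [Finset.mem_coe] at hD hD'
  rw [ordOf, ordOf] at heq
  rw [dif_pos hD, dif_pos hD'] at heq
  have := π.injective (he₀ heq)
  exact congrArg Subtype.val this

lemma botF_congr {key key' : Fin n → ℕ} {W' : Finset (Fin n)}
    (hinj : ∀ u ∈ W', ∀ v ∈ W', key u = key v → u = v) (h3 : 3 ≤ W'.card)
    (hagree : ∀ u ∈ W', key u = key' u) : botF key W' = botF key' W' := by
  have hinj' : ∀ u ∈ W', ∀ v ∈ W', key' u = key' v → u = v := by
    intro u hu v hv heq
    exact hinj u hu v hv (by rw [hagree u hu, hagree v hv]; exact heq)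
  exact eq_botF hinj' h3 (dc2_congr hagree (dc2_botF hinj h3))

set_option maxHeartbeats 2000000 in
/-- **Per-`W` counting bound.** For a fixed unresolved `W` and forbidden pair `fW`,
at most a third of the permutations give a refinement matching the forbidden pattern. -/
lemma per_W_bound {V : Finset (Fin n)} {L : Finset (Finset (Fin n))} (h : Lam V L)
    (e₀ : {x // x ∈ L} → ℕ) (he₀ : Function.Injective e₀)
    {W : Finset (Fin n)} (hWV : W ⊆ V) (hcard : W.card = 3 ∨ W.card = 4)
    (hunres : ∀ C ∈ L, (C ∩ W).card ≠ 2) (fW : Finset (Fin n)) :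
    3 * (Finset.univ.filter (fun π : Equiv.Perm {x // x ∈ L} =>
        ∃ E ∈ refineL L (ordOf L e₀ π), (E ∩ W).card = 2 ∧
          (E ∩ W = fW ∨ E ∩ W = W \ fW))).card
      ≤ Fintype.card (Equiv.Perm {x // x ∈ L}) := by
  set Ω := Equiv.Perm {x // x ∈ L} with hΩ
  set P : Ω → Prop := fun π =>
      ∃ E ∈ refineL L (ordOf L e₀ π), (E ∩ W).card = 2 ∧
        (E ∩ W = fW ∨ E ∩ W = W \ fW) with hP
  by_cases hM : ∃ π, P π
  swap
  · push_neg at hM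
    have : Finset.univ.filter P = ∅ := Finset.filter_eq_empty_iff.2 (fun {π} _ => hM π)
    rw [this]
    simp
  obtain ⟨C, W', hCL, h2C, hW'C, hW'W, hW'or, hW'3, hCW, hparts, hchar⟩ :=
    struct h hWV hcard hunres
  have hAL : ∀ u ∈ W', part L C u ∈ L := fun u hu => (part_spec h hCL (hW'C hu) h2C).1
  have hAinj : ∀ u ∈ W', ∀ v ∈ W', part L C u = part L C v → u = v := by
    intro u hu v hv heq
    have h1 : u ∈ part L C u ∩ W := Finset.mem_inter.2
      ⟨(part_spec h hCL (hW'C hu) h2C).2.2.2.1, hW'W hu⟩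
    rw [heq, hparts v hv] at h1
    exact Finset.mem_singleton.1 h1
  set key : Ω → Fin n → ℕ := fun π u => ordOf L e₀ π (part L C u) with hkey
  have hkeyinj : ∀ π : Ω, ∀ u ∈ W', ∀ v ∈ W', key π u = key π v → u = v := by
    intro π u hu v hv heq
    exact hAinj u hu v hv (ordOf_injOn he₀ π (hAL u hu) (hAL v hv) heq)
  have hbot : ∀ π : Ω, botF (key π) W' ⊆ W' ∧ (botF (key π) W').card = 2 :=
    fun π => ⟨(dc2_botF (hkeyinj π) hW'3).1, (dc2_botF (hkeyinj π) hW'3).2.1⟩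
  have hmatchbot : ∀ π : Ω, P π →
      botF (key π) W' = fW ∨ botF (key π) W' = W \ fW := by
    intro π hπ
    obtain ⟨E, hE, hE2, htar⟩ := hπ
    have hch := (hchar (ordOf L e₀ π)).1 E hE hE2
    have hdc : dc2 (key π) W' (E ∩ W) := ⟨hch.1, hE2, hch.2⟩
    have := eq_botF (hkeyinj π) hW'3 hdc
    rcases htar with h' | h'
    · left; rw [← this, h']
    · right; rw [← this, h']
  -- swap action on botF
  have hswapbot : ∀ x : Fin n, ∀ hx : x ∈ W', ∀ y : Fin n, ∀ hy : y ∈ W', x ≠ y →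
      ∀ π : Ω, botF (key (π * Equiv.swap (⟨part L C x, hAL x hx⟩ : {z // z ∈ L})
        ⟨part L C y, hAL y hy⟩)) W' = (botF (key π) W').image (Equiv.swap x y) := by
    intro x hx y hy hxy π
    have hσW' : W'.image (Equiv.swap x y) = W' := image_swap_invariant hx hy
    have hagree : ∀ u ∈ W',
        key (π * Equiv.swap (⟨part L C x, hAL x hx⟩ : {z // z ∈ L})
          ⟨part L C y, hAL y hy⟩) u = key π (Equiv.swap x y u) := by
      intro u hu
      have hσuW' : Equiv.swap x y u ∈ W' := by
        rw [← hσW']; exact Finset.mem_image_of_mem _ hu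
      have hval : (Equiv.swap (⟨part L C x, hAL x hx⟩ : {z // z ∈ L})
          ⟨part L C y, hAL y hy⟩ ⟨part L C u, hAL u hu⟩ : {z // z ∈ L}) =
          ⟨part L C (Equiv.swap x y u), hAL _ hσuW'⟩ := by
        apply Subtype.ext
        by_cases h1 : u = x
        · subst h1
          simp [Equiv.swap_apply_left]
        by_cases h2 : u = y
        · subst h2
          simp [Equiv.swap_apply_right]
        · have hne1 : (⟨part L C u, hAL u hu⟩ : {z // z ∈ L}) ≠
              ⟨part L C x, hAL x hx⟩ := by
            intro hcon
            exact h1 (hAinj u hu x hx (congrArg Subtype.val hcon))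
          have hne2 : (⟨part L C u, hAL u hu⟩ : {z // z ∈ L}) ≠
              ⟨part L C y, hAL y hy⟩ := by
            intro hcon
            exact h2 (hAinj u hu y hy (congrArg Subtype.val hcon))
          simp [Equiv.swap_apply_of_ne_of_ne hne1 hne2,
            Equiv.swap_apply_of_ne_of_ne h1 h2]
      show ordOf L e₀ _ (part L C u) = ordOf L e₀ π (part L C (Equiv.swap x y u))
      simp only [ordOf, dif_pos (hAL u hu), dif_pos (hAL _ hσuW')]
      congr 1
      show π ((Equiv.swap (⟨part L C x, hAL x hx⟩ : {z // z ∈ L})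
          ⟨part L C y, hAL y hy⟩) ⟨part L C u, hAL u hu⟩) = _
      rw [hval]
    have hstep2 := botF_congr (hkeyinj (π * Equiv.swap
      (⟨part L C x, hAL x hx⟩ : {z // z ∈ L}) ⟨part L C y, hAL y hy⟩)) hW'3 hagree
    have hstep3 := botF_image (key := key π) (Equiv.swap x y) hσW' (hkeyinj π) hW'3
    rw [hstep2, ← hstep3, image_swap_image]
  obtain ⟨π₀, hπ₀⟩ := hM
  have hbot₀ := hmatchbot π₀ hπ₀
  have hpair : ∀ T : Finset (Fin n), T.card = 2 → ∀ a ∈ T, ∃ t, t ≠ a ∧ T = {a, t} := by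
    intro T hT a ha
    have h1 : (T.erase a).card = 1 := by rw [Finset.card_erase_of_mem ha]; omega
    obtain ⟨t, ht⟩ := Finset.card_eq_one.1 h1
    have htne : t ≠ a := by
      have : t ∈ T.erase a := ht ▸ Finset.mem_singleton_self t
      exact (Finset.mem_erase.1 this).1
    refine ⟨t, htne, ?_⟩
    rw [← Finset.insert_erase ha, ht]
  have img_erase : ∀ a ∈ W', ∀ b ∈ W',
      (W'.erase a).image (Equiv.swap a b) = W'.erase b := by
    intro a ha b hb
    rw [Finset.erase_eq, Finset.erase_eq, image_swap_sdiff,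
      image_swap_invariant ha hb, Finset.image_singleton, Equiv.swap_apply_left]
  by_cases hc3 : W'.card = 3
  · -- triple case
    have hcov : ∀ π : Ω, ∃ x ∈ W', botF (key π) W' = W'.erase x := by
      intro π
      obtain ⟨hsub, hcard2⟩ := hbot π
      have hsd : (W' \ botF (key π) W').card = 1 := by
        rw [Finset.card_sdiff_of_subset hsub]; omega
      obtain ⟨x, hx⟩ := Finset.card_eq_one.1 hsd
      have hxW' : x ∈ W' := by
        have : x ∈ W' \ botF (key π) W' := hx ▸ Finset.mem_singleton_self x
        exact (Finset.mem_sdiff.1 this).1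
      refine ⟨x, hxW', ?_⟩
      rw [Finset.erase_eq, ← hx, Finset.sdiff_sdiff_eq_self hsub]
    obtain ⟨x₀, hx₀W, hx₀⟩ := hcov π₀
    have hclash : ∀ x ∈ W', ∀ y ∈ W', W'.erase x = fW → W'.erase y = W \ fW → False := by
      intro x hxW y hyW hxf hyf
      by_cases hWW : W' = W
      · have hxWm : x ∈ W := hWW ▸ hxW
        have h1 : W \ fW = {x} := by
          rw [← hxf, hWW]
          ext u
          simp only [Finset.mem_sdiff, Finset.mem_erase, Finset.mem_singleton]
          constructor
          · rintro ⟨huW, hne⟩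
            by_contra hux
            exact hne ⟨hux, huW⟩
          · rintro rfl
            exact ⟨hxWm, fun hcon => hcon.1 rfl⟩
        rw [h1] at hyf
        have h2 : (W'.erase y).card = 1 := by rw [hyf]; simp
        rw [Finset.card_erase_of_mem hyW] at h2
        omega
      · have hproper : W' ⊂ W := lt_of_le_of_ne hW'W hWW
        obtain ⟨d, hdW, hdW'⟩ := Finset.exists_of_ssubset hproper
        have hd1 : d ∈ W \ fW := Finset.mem_sdiff.2 ⟨hdW, fun hdf =>
          hdW' (Finset.mem_of_mem_erase (hxf ▸ hdf))⟩
        rw [← hyf] at hd1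
        exact hdW' (Finset.mem_of_mem_erase hd1)
    have hQmatch : ∀ π : Ω, P π → botF (key π) W' = W'.erase x₀ := by
      intro π hπ
      obtain ⟨x₁, hx₁W, hx₁⟩ := hcov π
      have hb := hmatchbot π hπ
      by_cases hval : botF (key π) W' = botF (key π₀) W'
      · rw [hval, hx₀]
      · exfalso
        rcases hb with hb | hb <;> rcases hbot₀ with hb0 | hb0
        · exact hval (hb.trans hb0.symm)
        · exact hclash x₁ hx₁W x₀ hx₀W (hx₁.symm.trans hb) (hx₀.symm.trans hb0)
        · exact hclash x₀ hx₀W x₁ hx₁W (hx₀.symm.trans hb0) (hx₁.symm.trans hb)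
        · exact hval (hb.trans hb0.symm)
    have herase2 : (W'.erase x₀).card = 2 := by
      rw [Finset.card_erase_of_mem hx₀W]; omega
    obtain ⟨y, z, hyz, hyzeq⟩ := Finset.card_eq_two.1 herase2
    have hymem : y ∈ W'.erase x₀ := hyzeq ▸ Finset.mem_insert_self y {z}
    have hzmem : z ∈ W'.erase x₀ := hyzeq ▸ (by simp)
    have hyW' : y ∈ W' := Finset.mem_of_mem_erase hymem
    have hzW' : z ∈ W' := Finset.mem_of_mem_erase hzmem
    have hyx₀ : y ≠ x₀ := (Finset.mem_erase.1 hymem).1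
    have hzx₀ : z ≠ x₀ := (Finset.mem_erase.1 hzmem).1
    have hW'eq : W' = {x₀, y, z} := by
      rw [← Finset.insert_erase hx₀W, hyzeq]
    have erase_ne : ∀ a ∈ W', ∀ b : Fin n, a ≠ b → W'.erase a ≠ W'.erase b := by
      intro a ha b hab hcon
      have : a ∈ W'.erase b := Finset.mem_erase.2 ⟨hab, ha⟩
      rw [← hcon] at this
      exact (Finset.mem_erase.1 this).1 rfl
    have hswiff3 : ∀ s t : Fin n, ∀ hsW' : s ∈ W', ∀ htW' : t ∈ W', s ≠ t → ∀ π : Ω,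
        (botF (key π) W' = W'.erase s ↔
          botF (key (π * Equiv.swap (⟨part L C s, hAL s hsW'⟩ : {w // w ∈ L})
            ⟨part L C t, hAL t htW'⟩)) W' = W'.erase t) := by
      intro s t hsW' htW' hst π
      have hsw := hswapbot s hsW' t htW' hst π
      constructor
      · intro h1'
        rw [hsw, h1', img_erase s hsW' t htW']
      · intro h1'
        rw [hsw] at h1'
        have h3' := congrArg (fun S => Finset.image (Equiv.swap s t) S) h1'
        simp only [image_swap_image] at h3'
        rw [h3', Equiv.swap_comm, img_erase t htW' s hsW']
    have H := three_class_bound P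
      (fun π => botF (key π) W' = W'.erase x₀)
      (fun π => botF (key π) W' = W'.erase y)
      (fun π => botF (key π) W' = W'.erase z)
      (by
        intro π
        obtain ⟨x, hxW, hx⟩ := hcov π
        rw [hW'eq] at hxW
        rcases Finset.mem_insert.1 hxW with rfl | hxW
        · exact Or.inl hx
        rcases Finset.mem_insert.1 hxW with rfl | hxW
        · exact Or.inr (Or.inl hx)
        · rw [Finset.mem_singleton.1 hxW] at hx
          exact Or.inr (Or.inr hx))
      (by
        rintro π ⟨h1', h2'⟩
        exact erase_ne x₀ hx₀W y (Ne.symm hyx₀) (h1'.symm.trans h2'))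
      (by
        rintro π ⟨h1', h2'⟩
        exact erase_ne x₀ hx₀W z (Ne.symm hzx₀) (h1'.symm.trans h2'))
      (by
        rintro π ⟨h1', h2'⟩
        exact erase_ne y hyW' z hyz (h1'.symm.trans h2'))
      (Equiv.mulRight (Equiv.swap (⟨part L C x₀, hAL x₀ hx₀W⟩ : {w // w ∈ L})
        ⟨part L C y, hAL y hyW'⟩))
      (fun π => hswiff3 x₀ y hx₀W hyW' (Ne.symm hyx₀) π)
      (Equiv.mulRight (Equiv.swap (⟨part L C x₀, hAL x₀ hx₀W⟩ : {w // w ∈ L})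
        ⟨part L C z, hAL z hzW'⟩))
      (fun π => hswiff3 x₀ z hx₀W hzW' (Ne.symm hzx₀) π)
      hQmatch
    refine le_trans (le_of_eq ?_) H
    congr 1
    apply congrArg
    ext π
    simp only [Finset.mem_filter]
    rfl
  · -- quadruple case
    have hW'W4 : W' = W := hW'or.resolve_left hc3
    have hc4 : W'.card = 4 := by
      have : W'.card = W.card := by rw [hW'W4]
      omega
    have hS₀sub : botF (key π₀) W' ⊆ W' := (hbot π₀).1
    have hS₀2 : (botF (key π₀) W').card = 2 := (hbot π₀).2
    have claimQ1 : ∀ π : Ω, P π → botF (key π) W' = botF (key π₀) W' ∨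
        botF (key π) W' = W' \ botF (key π₀) W' := by
      intro π hπ
      rcases hmatchbot π hπ with hb | hb <;> rcases hbot₀ with hb0 | hb0
      · left; rw [hb, ← hb0]
      · right
        have hfWsub : fW ⊆ W := by
          rw [← hb]; exact hW'W4 ▸ (hbot π).1
        rw [hb, hb0, hW'W4, Finset.sdiff_sdiff_eq_self hfWsub]
      · right
        rw [hb, hb0, hW'W4]
      · left; rw [hb, ← hb0]
    obtain ⟨a, w₁, haw, hS₀eq⟩ := Finset.card_eq_two.1 hS₀2
    have haW' : a ∈ W' := hS₀sub (hS₀eq ▸ Finset.mem_insert_self a {w₁})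
    have hw₁W' : w₁ ∈ W' := hS₀sub (hS₀eq ▸ (by simp))
    have hw₁a : w₁ ≠ a := Ne.symm haw
    have hsd2 : (W' \ botF (key π₀) W').card = 2 := by
      rw [Finset.card_sdiff_of_subset hS₀sub]; omega
    obtain ⟨y, z, hyzne, hyz⟩ := Finset.card_eq_two.1 hsd2
    have hymem : y ∈ W' \ botF (key π₀) W' := hyz ▸ Finset.mem_insert_self y {z}
    have hzmem : z ∈ W' \ botF (key π₀) W' := hyz ▸ (by simp)
    have hyW' : y ∈ W' := (Finset.mem_sdiff.1 hymem).1
    have hzW' : z ∈ W' := (Finset.mem_sdiff.1 hzmem).1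
    have hyS₀ : y ∉ botF (key π₀) W' := (Finset.mem_sdiff.1 hymem).2
    have hzS₀ : z ∉ botF (key π₀) W' := (Finset.mem_sdiff.1 hzmem).2
    have hya : y ≠ a := fun hcon => hyS₀ (by rw [hS₀eq, hcon]; simp)
    have hza : z ≠ a := fun hcon => hzS₀ (by rw [hS₀eq, hcon]; simp)
    have hyw₁ : y ≠ w₁ := fun hcon => hyS₀ (by rw [hS₀eq, hcon]; simp)
    have hzw₁ : z ≠ w₁ := fun hcon => hzS₀ (by rw [hS₀eq, hcon]; simp)
    have htclass : ∀ t : Fin n, t ∈ W' → t ≠ a → t = w₁ ∨ t = y ∨ t = z := by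
      intro t htW' htna
      by_cases h1' : t ∈ botF (key π₀) W'
      · rw [hS₀eq] at h1'
        rcases Finset.mem_insert.1 h1' with rfl | h1'
        · exact absurd rfl htna
        · exact Or.inl (Finset.mem_singleton.1 h1')
      · have h2' : t ∈ W' \ botF (key π₀) W' := Finset.mem_sdiff.2 ⟨htW', h1'⟩
        rw [hyz] at h2'
        rcases Finset.mem_insert.1 h2' with rfl | h2'
        · exact Or.inr (Or.inl rfl)
        · exact Or.inr (Or.inr (Finset.mem_singleton.1 h2'))
    have hcov4 : ∀ π : Ω, ∃ t : Fin n, (t = w₁ ∨ t = y ∨ t = z) ∧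
        (botF (key π) W' = {a, t} ∨ botF (key π) W' = W' \ {a, t}) := by
      intro π
      obtain ⟨hsub, h2'⟩ := hbot π
      by_cases ha : a ∈ botF (key π) W'
      · obtain ⟨t, htne, hteq⟩ := hpair _ h2' a ha
        have htW' : t ∈ W' := hsub (hteq ▸ (by simp))
        exact ⟨t, htclass t htW' htne, Or.inl hteq⟩
      · have hasd : a ∈ W' \ botF (key π) W' := Finset.mem_sdiff.2 ⟨haW', ha⟩
        have hsdc : (W' \ botF (key π) W').card = 2 := by
          rw [Finset.card_sdiff_of_subset hsub]; omega
        obtain ⟨t, htne, hteq⟩ := hpair _ hsdc a hasd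
        have htmem : t ∈ W' \ botF (key π) W' := by rw [hteq]; simp
        have htW' : t ∈ W' := (Finset.mem_sdiff.1 htmem).1
        refine ⟨t, htclass t htW' htne, Or.inr ?_⟩
        rw [← hteq, Finset.sdiff_sdiff_eq_self hsub]
    have hpairsub : ∀ s : Fin n, s ∈ W' → ({a, s} : Finset (Fin n)) ⊆ W' := by
      intro s hsW' u hu
      rcases Finset.mem_insert.1 hu with rfl | hu
      · exact haW'
      · rw [Finset.mem_singleton.1 hu]; exact hsW'
    have hpairne : ∀ s t : Fin n, s ≠ t → s ≠ a →
        ({a, s} : Finset (Fin n)) ≠ {a, t} := by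
      intro s t hst hs hcon
      have h1' : s ∈ ({a, t} : Finset (Fin n)) := hcon ▸ (by simp)
      rcases Finset.mem_insert.1 h1' with h'' | h''
      · exact hs h''
      · exact hst (Finset.mem_singleton.1 h'')
    have hmixne : ∀ s t : Fin n, ({a, s} : Finset (Fin n)) ≠ W' \ {a, t} := by
      intro s t hcon
      have h1' : a ∈ W' \ ({a, t} : Finset (Fin n)) := hcon ▸ Finset.mem_insert_self a {s}
      exact (Finset.mem_sdiff.1 h1').2 (by simp)
    have hsdne : ∀ s t : Fin n, s ∈ W' → t ∈ W' → s ≠ t → s ≠ a →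
        W' \ ({a, s} : Finset (Fin n)) ≠ W' \ {a, t} := by
      intro s t hsW' htW' hst hs hcon
      have h1' := congrArg (fun S => W' \ S) hcon
      try simp only at h1'
      rw [Finset.sdiff_sdiff_eq_self (hpairsub s hsW'),
        Finset.sdiff_sdiff_eq_self (hpairsub t htW')] at h1'
      exact hpairne s t hst hs h1'
    have hclassdisj : ∀ s t : Fin n, s ∈ W' → t ∈ W' → s ≠ t → s ≠ a → t ≠ a →
        ∀ π : Ω, ¬((botF (key π) W' = {a, s} ∨ botF (key π) W' = W' \ {a, s}) ∧
          (botF (key π) W' = {a, t} ∨ botF (key π) W' = W' \ {a, t})) := by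
      rintro s t hsW' htW' hst hs ht π ⟨h1' | h1', h2' | h2'⟩
      · exact hpairne s t hst hs (h1'.symm.trans h2')
      · exact hmixne s t (h1'.symm.trans h2')
      · exact hmixne t s (h2'.symm.trans h1')
      · exact hsdne s t hsW' htW' hst hs (h1'.symm.trans h2')
    have himgpair : ∀ s t : Fin n, s ∈ W' → t ∈ W' → s ≠ a → t ≠ a →
        ((({a, s} : Finset (Fin n)).image (Equiv.swap s t) = {a, t}) ∧
         ((W' \ ({a, s} : Finset (Fin n))).image (Equiv.swap s t) = W' \ {a, t})) := by
      intro s t hsW' htW' hs ht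
      have h1' : ({a, s} : Finset (Fin n)).image (Equiv.swap s t) = {a, t} := by
        rw [image_swap_pair, Equiv.swap_apply_of_ne_of_ne (Ne.symm hs) (Ne.symm ht),
          Equiv.swap_apply_left]
      refine ⟨h1', ?_⟩
      rw [image_swap_sdiff, image_swap_invariant hsW' htW', h1']
    have hswiff : ∀ s t : Fin n, ∀ hsW' : s ∈ W', ∀ htW' : t ∈ W', s ≠ t → s ≠ a → t ≠ a →
        ∀ π : Ω, ((botF (key π) W' = {a, s} ∨ botF (key π) W' = W' \ {a, s}) ↔
          (botF (key (π * Equiv.swap (⟨part L C s, hAL s hsW'⟩ : {w // w ∈ L})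
            ⟨part L C t, hAL t htW'⟩)) W' = {a, t} ∨
           botF (key (π * Equiv.swap (⟨part L C s, hAL s hsW'⟩ : {w // w ∈ L})
            ⟨part L C t, hAL t htW'⟩)) W' = W' \ {a, t})) := by
      intro s t hsW' htW' hst hs ht π
      have hsw := hswapbot s hsW' t htW' hst π
      constructor
      · rintro (h1' | h1')
        · left; rw [hsw, h1', (himgpair s t hsW' htW' hs ht).1]
        · right; rw [hsw, h1', (himgpair s t hsW' htW' hs ht).2]
      · rintro (h1' | h1')
        · left
          rw [hsw] at h1'
          have h3' := congrArg (fun S => Finset.image (Equiv.swap s t) S) h1'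
          simp only [image_swap_image] at h3'
          rw [h3', Equiv.swap_comm, (himgpair t s htW' hsW' ht hs).1]
        · right
          rw [hsw] at h1'
          have h3' := congrArg (fun S => Finset.image (Equiv.swap s t) S) h1'
          simp only [image_swap_image] at h3'
          rw [h3', Equiv.swap_comm, (himgpair t s htW' hsW' ht hs).2]
    have H := three_class_bound P
      (fun π => botF (key π) W' = {a, w₁} ∨ botF (key π) W' = W' \ {a, w₁})
      (fun π => botF (key π) W' = {a, y} ∨ botF (key π) W' = W' \ {a, y})
      (fun π => botF (key π) W' = {a, z} ∨ botF (key π) W' = W' \ {a, z})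
      (by
        intro π
        obtain ⟨t, ht3, hcls⟩ := hcov4 π
        rcases ht3 with rfl | rfl | rfl
        · exact Or.inl hcls
        · exact Or.inr (Or.inl hcls)
        · exact Or.inr (Or.inr hcls))
      (fun π => hclassdisj w₁ y hw₁W' hyW' (Ne.symm hyw₁) hw₁a hya π)
      (fun π => hclassdisj w₁ z hw₁W' hzW' (Ne.symm hzw₁) hw₁a hza π)
      (fun π => hclassdisj y z hyW' hzW' hyzne hya hza π)
      (Equiv.mulRight (Equiv.swap (⟨part L C w₁, hAL w₁ hw₁W'⟩ : {w // w ∈ L})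
        ⟨part L C y, hAL y hyW'⟩))
      (fun π => hswiff w₁ y hw₁W' hyW' (Ne.symm hyw₁) hw₁a hya π)
      (Equiv.mulRight (Equiv.swap (⟨part L C w₁, hAL w₁ hw₁W'⟩ : {w // w ∈ L})
        ⟨part L C z, hAL z hzW'⟩))
      (fun π => hswiff w₁ z hw₁W' hzW' (Ne.symm hzw₁) hw₁a hza π)
      (by
        intro π hπ
        rcases claimQ1 π hπ with h1' | h1'
        · left; rw [h1', hS₀eq]
        · right; rw [h1', hS₀eq])
    refine le_trans (le_of_eq ?_) H
    congr 1
    apply congrArg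
    ext π
    simp only [Finset.mem_filter]
    rfl

end Counting

/-- **Main refinement lemma**: every laminar system has a binary refinement that
disagrees with the forbidden assignment `f` on at least two thirds of `R`. -/
lemma count_main {V : Finset (Fin n)} {L : Finset (Finset (Fin n))} (h : Lam V L)
    (f : Finset (Fin n) → Finset (Fin n)) (R : Finset (Finset (Fin n)))
    (hR : ∀ W ∈ R, W ⊆ V ∧ (W.card = 3 ∨ W.card = 4) ∧ ∀ C ∈ L, (C ∩ W).card ≠ 2) :
    ∃ L' : Finset (Finset (Fin n)), Lam V L' ∧ Bin L' ∧ L ⊆ L' ∧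
      3 * (R.filter (fun W => ∃ E ∈ L', (E ∩ W).card = 2 ∧
          (E ∩ W = f W ∨ E ∩ W = W \ f W))).card ≤ R.card := by
  classical
  set e₀ : {x // x ∈ L} → ℕ := fun x => ((Fintype.equivFin {x // x ∈ L}) x : ℕ) with he₀def
  have he₀ : Function.Injective e₀ := by
    intro x y hxy
    exact (Fintype.equivFin {x // x ∈ L}).injective (Fin.val_injective hxy)
  set Ω := Equiv.Perm {x // x ∈ L} with hΩ
  set mP : Finset (Fin n) → Ω → Prop := fun W π =>
    ∃ E ∈ refineL L (ordOf L e₀ π), (E ∩ W).card = 2 ∧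
      (E ∩ W = f W ∨ E ∩ W = W \ f W) with hmP
  have hperW : ∀ W ∈ R, 3 * (Finset.univ.filter (fun π : Ω => mP W π)).card ≤
      Fintype.card Ω := by
    intro W hW
    obtain ⟨h1, h2, h3⟩ := hR W hW
    exact per_W_bound h e₀ he₀ h1 h2 h3 (f W)
  have hswap : ∑ π : Ω, (R.filter (fun W => mP W π)).card =
      ∑ W ∈ R, (Finset.univ.filter (fun π : Ω => mP W π)).card := by
    simp only [Finset.card_filter]
    rw [Finset.sum_comm]
  have htot : ∑ π : Ω, 3 * (R.filter (fun W => mP W π)).card ≤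
      R.card * Fintype.card Ω := by
    calc ∑ π : Ω, 3 * (R.filter (fun W => mP W π)).card
        = 3 * ∑ π : Ω, (R.filter (fun W => mP W π)).card := (Finset.mul_sum _ _ _).symm
      _ = 3 * ∑ W ∈ R, (Finset.univ.filter (fun π : Ω => mP W π)).card := by rw [hswap]
      _ = ∑ W ∈ R, 3 * (Finset.univ.filter (fun π : Ω => mP W π)).card :=
          Finset.mul_sum _ _ _
      _ ≤ ∑ W ∈ R, Fintype.card Ω := Finset.sum_le_sum (fun W hW => hperW W hW)
      _ = R.card * Fintype.card Ω := by rw [Finset.sum_const, smul_eq_mul]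
  have hNpos : 0 < Fintype.card Ω := Fintype.card_pos
  have hex : ∃ π : Ω, 3 * (R.filter (fun W => mP W π)).card ≤ R.card := by
    by_contra hcon
    push_neg at hcon
    have : ∑ π : Ω, (R.card + 1) ≤ ∑ π : Ω, 3 * (R.filter (fun W => mP W π)).card :=
      Finset.sum_le_sum (fun π _ => hcon π)
    rw [Finset.sum_const, smul_eq_mul, Finset.card_univ] at this
    nlinarith [htot, this]
  obtain ⟨π, hπ⟩ := hex
  exact ⟨refineL L (ordOf L e₀ π), refineL_lam h _,
    refineL_bin h (ordOf_injOn he₀ π), subset_refineL, hπ⟩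


end Dev
section RootedApp
variable {n : ℕ}

lemma rtree_lam (T : RTree n) : Lam Finset.univ T.clusters :=
  ⟨T.univ_mem, fun y _ => T.singleton_mem y, T.empty_not_mem,
    fun C _ => Finset.subset_univ C, T.laminar⟩

lemma pair_unique {G : Finset (Finset (Fin n))}
    (hlam : ∀ C ∈ G, ∀ D ∈ G, C ⊆ D ∨ D ⊆ C ∨ C ∩ D = ∅)
    {X : Finset (Fin n)} (hX3 : X.card = 3) {C D : Finset (Fin n)}
    (hC : C ∈ G) (hD : D ∈ G) (hC2 : (C ∩ X).card = 2) (hD2 : (D ∩ X).card = 2) :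
    C ∩ X = D ∩ X := by
  rcases hlam C hC D hD with h' | h' | h'
  · exact Finset.eq_of_subset_of_card_le
      (Finset.inter_subset_inter h' (Finset.Subset.refl X)) (by omega)
  · exact (Finset.eq_of_subset_of_card_le
      (Finset.inter_subset_inter h' (Finset.Subset.refl X)) (by omega)).symm
  · exfalso
    have hdisj : Disjoint (C ∩ X) (D ∩ X) := by
      rw [Finset.disjoint_left]
      intro x hx hx'
      have : x ∈ C ∩ D := Finset.mem_inter.2
        ⟨(Finset.mem_inter.1 hx).1, (Finset.mem_inter.1 hx').1⟩
      rw [h'] at this; simp at this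
    have hsub : (C ∩ X) ∪ (D ∩ X) ⊆ X :=
      Finset.union_subset Finset.inter_subset_right Finset.inter_subset_right
    have := Finset.card_le_card hsub
    rw [Finset.card_union_of_disjoint hdisj] at this
    omega

lemma mem_famRestrict {F : Finset (Finset (Fin n))} {X A : Finset (Fin n)} :
    A ∈ famRestrict F X ↔ (∃ C ∈ F, C ∩ X = A) ∧ A ≠ ∅ := by
  rw [famRestrict, Finset.mem_filter, Finset.mem_image]

lemma famResolved_mono {F G : Finset (Finset (Fin n))} (hFG : F ⊆ G)
    {X : Finset (Fin n)} : famResolved F X → famResolved G X := by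
  rintro ⟨C, hC, h2⟩
  exact ⟨C, hFG hC, h2⟩

lemma restrict_stable {F G : Finset (Finset (Fin n))} (hFG : F ⊆ G)
    (hFuniv : Finset.univ ∈ F) (hFsing : ∀ x : Fin n, ({x} : Finset (Fin n)) ∈ F)
    (hGlam : ∀ C ∈ G, ∀ D ∈ G, C ⊆ D ∨ D ⊆ C ∨ C ∩ D = ∅)
    {X : Finset (Fin n)} (hX3 : X.card = 3) (hres : famResolved F X) :
    famRestrict G X = famRestrict F X := by
  apply Finset.Subset.antisymm
  · intro A hA
    rw [mem_famRestrict] at hA ⊢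
    obtain ⟨⟨C, hC, rfl⟩, hAne⟩ := hA
    refine ⟨?_, hAne⟩
    have hle : (C ∩ X).card ≤ 3 := hX3 ▸ Finset.card_le_card Finset.inter_subset_right
    have h1 : 1 ≤ (C ∩ X).card := Finset.card_pos.2
      (Finset.nonempty_iff_ne_empty.2 hAne)
    have hcases : (C ∩ X).card = 1 ∨ (C ∩ X).card = 2 ∨ (C ∩ X).card = 3 := by omega
    rcases hcases with h' | h' | h'
    · obtain ⟨y, hy⟩ := Finset.card_eq_one.1 h'
      have hyX : y ∈ X := by
        have : y ∈ C ∩ X := hy ▸ Finset.mem_singleton_self y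
        exact (Finset.mem_inter.1 this).2
      exact ⟨{y}, hFsing y, by
        rw [hy, Finset.singleton_inter_of_mem hyX]⟩
    · obtain ⟨D, hD, hD2⟩ := hres
      exact ⟨D, hD, pair_unique hGlam hX3 (hFG hD) hC hD2 h'⟩
    · have : C ∩ X = X := Finset.eq_of_subset_of_card_le
        Finset.inter_subset_right (by omega)
      exact ⟨Finset.univ, hFuniv, by rw [Finset.univ_inter, this]⟩
  · intro A hA
    rw [mem_famRestrict] at hA ⊢
    obtain ⟨⟨C, hC, rfl⟩, hAne⟩ := hA
    exact ⟨⟨C, hFG hC, rfl⟩, hAne⟩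

noncomputable def fpair (F : Finset (Finset (Fin n))) (X : Finset (Fin n)) :
    Finset (Fin n) :=
  if h : ∃ C ∈ F, (C ∩ X).card = 2 then h.choose ∩ X else ∅

lemma fpair_spec {F : Finset (Finset (Fin n))} {X : Finset (Fin n)}
    (h : famResolved F X) :
    (∃ C ∈ F, C ∩ X = fpair F X) ∧ (fpair F X).card = 2 := by
  have h' : ∃ C ∈ F, (C ∩ X).card = 2 := h
  rw [fpair, dif_pos h']
  obtain ⟨hC, h2⟩ := h'.choose_spec
  exact ⟨⟨h'.choose, hC, rfl⟩, h2⟩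

lemma nonmatch_ne {F G X : Finset (Finset (Fin n)) × Unit → Unit} : True := trivial

lemma nonmatch_restrict_ne {F G : Finset (Finset (Fin n))} {X : Finset (Fin n)}
    (hres : famResolved F X)
    (hnm : ¬ ∃ E ∈ G, (E ∩ X).card = 2 ∧
      (E ∩ X = fpair F X ∨ E ∩ X = X \ fpair F X)) :
    famRestrict G X ≠ famRestrict F X := by
  intro heq
  obtain ⟨⟨C, hC, hCeq⟩, h2⟩ := fpair_spec hres
  have h1 : fpair F X ∈ famRestrict F X := mem_famRestrict.2 ⟨⟨C, hC, hCeq⟩, by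
    intro hcon; rw [hcon] at h2; simp at h2⟩
  rw [← heq, mem_famRestrict] at h1
  obtain ⟨⟨E, hE, hEeq⟩, _⟩ := h1
  exact hnm ⟨E, hE, by rw [hEeq]; exact ⟨h2, Or.inl rfl⟩⟩

lemma mem_triplets {X : Finset (Fin n)} : X ∈ triplets n ↔ X.card = 3 := by
  rw [triplets, Finset.mem_powersetCard]
  exact ⟨fun h => h.2, fun h => ⟨Finset.subset_univ X, h⟩⟩

/-- adversarial full refinement of a rooted tree -/
lemma exists_adversary (T : RTree n) (f : Finset (Fin n) → Finset (Fin n))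
    (R : Finset (Finset (Fin n))) (hR : R ⊆ triplets n)
    (hRun : ∀ X ∈ R, ¬ famResolved T.clusters X) :
    ∃ t : RTree n, t ∈ T.FullRef ∧
      3 * (R.filter (fun X => ∃ E ∈ t.clusters, (E ∩ X).card = 2 ∧
          (E ∩ X = f X ∨ E ∩ X = X \ f X))).card ≤ R.card := by
  obtain ⟨L', hLam, hBin, hsub, hcount⟩ := count_main (rtree_lam T) f R (by
    intro W hW
    refine ⟨Finset.subset_univ W, Or.inl (mem_triplets.1 (hR hW)), ?_⟩
    intro C hC
    have := hRun W hW
    rw [famResolved] at this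
    push_neg at this
    exact this C hC)
  refine ⟨⟨L', hLam.top, fun x => hLam.sing x (Finset.mem_univ x), hLam.nemp, hLam.lam⟩,
    ⟨?_, hsub⟩, hcount⟩
  intro X hX
  have hX3 : X.card = 3 := mem_triplets.1 hX
  exact bin_resolves hLam hBin (Finset.subset_univ X) (by omega)

lemma fullref_nonempty (T : RTree n) : T.FullRef.Nonempty := by
  obtain ⟨t, ht, _⟩ := exists_adversary T (fun _ => ∅) ∅ (Finset.empty_subset _)
    (fun X hX => absurd hX (Finset.notMem_empty X))
  exact ⟨t, ht⟩

lemma tripletDist_nonneg (t₁ t₂ : RTree n) : 0 ≤ RTree.tripletDist t₁ t₂ :=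
  Nat.cast_nonneg _

lemma setD_mono_up {T₁ T₂ t₁ t₂ : RTree n} (h₁ : t₁ ∈ T₁.FullRef) (h₂ : t₂ ∈ T₂.FullRef) :
    RTree.setD T₁ T₂ ⊆ RTree.setD t₁ t₂ := by
  intro X hX
  rw [RTree.setD, famSetD, Finset.mem_filter] at hX ⊢
  obtain ⟨hXt, hres1, hres2, hne⟩ := hX
  have hX3 : X.card = 3 := mem_triplets.1 hXt
  refine ⟨hXt, famResolved_mono h₁.2 hres1, famResolved_mono h₂.2 hres2, ?_⟩
  rw [restrict_stable h₁.2 T₁.univ_mem T₁.singleton_mem t₁.laminar hX3 hres1,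
    restrict_stable h₂.2 T₂.univ_mem T₂.singleton_mem t₂.laminar hX3 hres2]
  exact hne

lemma setD_upper {T₁ T₂ t₁ t₂ : RTree n} (h₁ : t₁ ∈ T₁.FullRef) (h₂ : t₂ ∈ T₂.FullRef) :
    RTree.setD t₁ t₂ ⊆ ((RTree.setD T₁ T₂ ∪ RTree.setR1 T₁ T₂) ∪ RTree.setR2 T₁ T₂) ∪
      RTree.setU T₁ T₂ := by
  intro X hX
  rw [RTree.setD, famSetD, Finset.mem_filter] at hX
  obtain ⟨hXt, hres1, hres2, hne⟩ := hX
  have hX3 : X.card = 3 := mem_triplets.1 hXt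
  simp only [Finset.mem_union, RTree.setD, RTree.setR1, RTree.setR2, RTree.setU,
    famSetD, famSetR1, famSetR2, famSetU, Finset.mem_filter]
  by_cases hT1 : famResolved T₁.clusters X <;> by_cases hT2 : famResolved T₂.clusters X
  · refine Or.inl (Or.inl (Or.inl ⟨hXt, hT1, hT2, ?_⟩))
    intro hcon
    apply hne
    rw [restrict_stable h₁.2 T₁.univ_mem T₁.singleton_mem t₁.laminar hX3 hT1,
      restrict_stable h₂.2 T₂.univ_mem T₂.singleton_mem t₂.laminar hX3 hT2]
    exact hcon
  · exact Or.inl (Or.inl (Or.inr ⟨hXt, hT1, hT2⟩))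
  · exact Or.inl (Or.inr ⟨hXt, hT2, hT1⟩)
  · exact Or.inr ⟨hXt, hT1, hT2⟩

/-- distance upper bound for any pair of full refinements -/
lemma tripletDist_le {T₁ T₂ t₁ t₂ : RTree n} (h₁ : t₁ ∈ T₁.FullRef) (h₂ : t₂ ∈ T₂.FullRef) :
    RTree.tripletDist t₁ t₂ ≤ ((RTree.setD T₁ T₂).card : ℝ) +
      ((RTree.setR1 T₁ T₂).card : ℝ) + ((RTree.setR2 T₁ T₂).card : ℝ) +
      ((RTree.setU T₁ T₂).card : ℝ) := by
  have hA := Finset.card_le_card (setD_upper h₁ h₂)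
  have h3 := Finset.card_union_le ((RTree.setD T₁ T₂ ∪ RTree.setR1 T₁ T₂) ∪
    RTree.setR2 T₁ T₂) (RTree.setU T₁ T₂)
  have h4 := Finset.card_union_le (RTree.setD T₁ T₂ ∪ RTree.setR1 T₁ T₂)
    (RTree.setR2 T₁ T₂)
  have h5 := Finset.card_union_le (RTree.setD T₁ T₂) (RTree.setR1 T₁ T₂)
  have hnat : (RTree.setD t₁ t₂).card ≤ (RTree.setD T₁ T₂).card +
      (RTree.setR1 T₁ T₂).card + (RTree.setR2 T₁ T₂).card + (RTree.setU T₁ T₂).card := by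
    omega
  rw [RTree.tripletDist]
  exact_mod_cast hnat

/-- the adversarial lower bound against `R1`, uniform in `t₁` -/
lemma exists_t₂_adversary (T₁ T₂ : RTree n) :
    ∃ t₂ ∈ T₂.FullRef, ∀ t₁ ∈ T₁.FullRef,
      3 * ((RTree.setD T₁ T₂).card : ℝ) + 2 * ((RTree.setR1 T₁ T₂).card : ℝ) ≤
        3 * RTree.tripletDist t₁ t₂ := by
  set R := RTree.setR1 T₁ T₂ with hRdef
  have hRsub : R ⊆ triplets n := Finset.filter_subset _ _
  have hRun : ∀ X ∈ R, ¬ famResolved T₂.clusters X := by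
    intro X hX
    rw [hRdef, RTree.setR1, famSetR1, Finset.mem_filter] at hX
    exact hX.2.2
  obtain ⟨t₂, ht₂, hcount⟩ := exists_adversary T₂ (fpair T₁.clusters) R hRsub hRun
  refine ⟨t₂, ht₂, ?_⟩
  intro t₁ ht₁
  set Bad := R.filter (fun X => famRestrict t₂.clusters X ≠ famRestrict T₁.clusters X)
    with hBad
  have hBadcard : 2 * R.card ≤ 3 * Bad.card := by
    have hsub2 : R.filter (fun X => ¬ ∃ E ∈ t₂.clusters, (E ∩ X).card = 2 ∧
        (E ∩ X = fpair T₁.clusters X ∨ E ∩ X = X \ fpair T₁.clusters X)) ⊆ Bad := by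
      intro X hX
      rw [Finset.mem_filter] at hX
      rw [hBad, Finset.mem_filter]
      refine ⟨hX.1, ?_⟩
      have hres1 : famResolved T₁.clusters X := by
        have := hX.1
        rw [hRdef, RTree.setR1, famSetR1, Finset.mem_filter] at this
        exact this.2.1
      exact nonmatch_restrict_ne hres1 hX.2
    have h1 := Finset.card_le_card hsub2
    have h2 := Finset.card_filter_add_card_filter_not
      (s := R) (p := fun X => ∃ E ∈ t₂.clusters, (E ∩ X).card = 2 ∧
        (E ∩ X = fpair T₁.clusters X ∨ E ∩ X = X \ fpair T₁.clusters X))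
    omega
  have hincl : RTree.setD T₁ T₂ ∪ Bad ⊆ RTree.setD t₁ t₂ := by
    apply Finset.union_subset (setD_mono_up ht₁ ht₂)
    intro X hX
    rw [hBad, Finset.mem_filter] at hX
    obtain ⟨hXR, hne⟩ := hX
    rw [hRdef, RTree.setR1, famSetR1, Finset.mem_filter] at hXR
    obtain ⟨hXt, hres1, hnres2⟩ := hXR
    have hX3 : X.card = 3 := mem_triplets.1 hXt
    rw [RTree.setD, famSetD, Finset.mem_filter]
    refine ⟨hXt, famResolved_mono ht₁.2 hres1, ht₂.1 X hXt, ?_⟩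
    rw [restrict_stable ht₁.2 T₁.univ_mem T₁.singleton_mem t₁.laminar hX3 hres1]
    exact fun hcon => hne hcon.symm
  have hdisj : Disjoint (RTree.setD T₁ T₂) Bad := by
    rw [Finset.disjoint_left]
    intro X hX hX'
    rw [RTree.setD, famSetD, Finset.mem_filter] at hX
    rw [hBad, Finset.mem_filter, hRdef, RTree.setR1, famSetR1, Finset.mem_filter] at hX'
    exact hX'.1.2.2 hX.2.2.1
  have hcard : (RTree.setD T₁ T₂).card + Bad.card ≤ (RTree.setD t₁ t₂).card := by
    rw [← Finset.card_union_of_disjoint hdisj]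
    exact Finset.card_le_card hincl
  rw [RTree.tripletDist]
  have hfin : 3 * (RTree.setD T₁ T₂).card + 2 * R.card ≤ 3 * (RTree.setD t₁ t₂).card := by
    omega
  exact_mod_cast hfin

/-- the adversarial lower bound against `R2`, uniform in `t₂` -/
lemma exists_t₁_adversary (T₁ T₂ : RTree n) :
    ∃ t₁ ∈ T₁.FullRef, ∀ t₂ ∈ T₂.FullRef,
      3 * ((RTree.setD T₁ T₂).card : ℝ) + 2 * ((RTree.setR2 T₁ T₂).card : ℝ) ≤
        3 * RTree.tripletDist t₁ t₂ := by
  set R := RTree.setR2 T₁ T₂ with hRdef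
  have hRsub : R ⊆ triplets n := Finset.filter_subset _ _
  have hRun : ∀ X ∈ R, ¬ famResolved T₁.clusters X := by
    intro X hX
    rw [hRdef, RTree.setR2, famSetR2, Finset.mem_filter] at hX
    exact hX.2.2
  obtain ⟨t₁, ht₁, hcount⟩ := exists_adversary T₁ (fpair T₂.clusters) R hRsub hRun
  refine ⟨t₁, ht₁, ?_⟩
  intro t₂ ht₂
  set Bad := R.filter (fun X => famRestrict t₁.clusters X ≠ famRestrict T₂.clusters X)
    with hBad
  have hBadcard : 2 * R.card ≤ 3 * Bad.card := by
    have hsub2 : R.filter (fun X => ¬ ∃ E ∈ t₁.clusters, (E ∩ X).card = 2 ∧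
        (E ∩ X = fpair T₂.clusters X ∨ E ∩ X = X \ fpair T₂.clusters X)) ⊆ Bad := by
      intro X hX
      rw [Finset.mem_filter] at hX
      rw [hBad, Finset.mem_filter]
      refine ⟨hX.1, ?_⟩
      have hres2 : famResolved T₂.clusters X := by
        have := hX.1
        rw [hRdef, RTree.setR2, famSetR2, Finset.mem_filter] at this
        exact this.2.1
      exact nonmatch_restrict_ne hres2 hX.2
    have h1 := Finset.card_le_card hsub2
    have h2 := Finset.card_filter_add_card_filter_not
      (s := R) (p := fun X => ∃ E ∈ t₁.clusters, (E ∩ X).card = 2 ∧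
        (E ∩ X = fpair T₂.clusters X ∨ E ∩ X = X \ fpair T₂.clusters X))
    omega
  have hincl : RTree.setD T₁ T₂ ∪ Bad ⊆ RTree.setD t₁ t₂ := by
    apply Finset.union_subset (setD_mono_up ht₁ ht₂)
    intro X hX
    rw [hBad, Finset.mem_filter] at hX
    obtain ⟨hXR, hne⟩ := hX
    rw [hRdef, RTree.setR2, famSetR2, Finset.mem_filter] at hXR
    obtain ⟨hXt, hres2, hnres1⟩ := hXR
    have hX3 : X.card = 3 := mem_triplets.1 hXt
    rw [RTree.setD, famSetD, Finset.mem_filter]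
    refine ⟨hXt, ht₁.1 X hXt, famResolved_mono ht₂.2 hres2, ?_⟩
    rw [restrict_stable ht₂.2 T₂.univ_mem T₂.singleton_mem t₂.laminar hX3 hres2]
    exact hne
  have hdisj : Disjoint (RTree.setD T₁ T₂) Bad := by
    rw [Finset.disjoint_left]
    intro X hX hX'
    rw [RTree.setD, famSetD, Finset.mem_filter] at hX
    rw [hBad, Finset.mem_filter, hRdef, RTree.setR2, famSetR2, Finset.mem_filter] at hX'
    exact hX'.1.2.2 hX.2.1
  have hcard : (RTree.setD T₁ T₂).card + Bad.card ≤ (RTree.setD t₁ t₂).card := by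
    rw [← Finset.card_union_of_disjoint hdisj]
    exact Finset.card_le_card hincl
  rw [RTree.tripletDist]
  have hfin : 3 * (RTree.setD T₁ T₂).card + 2 * R.card ≤ 3 * (RTree.setD t₁ t₂).card := by
    omega
  exact_mod_cast hfin

end RootedApp
section RootedHaus
variable {n : ℕ}

lemma rooted_dHaus_le (T₁ T₂ : RTree n) :
    RTree.dHaus T₁ T₂ ≤ ((RTree.setD T₁ T₂).card : ℝ) + ((RTree.setR1 T₁ T₂).card : ℝ) +
      ((RTree.setR2 T₁ T₂).card : ℝ) + ((RTree.setU T₁ T₂).card : ℝ) := by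
  obtain ⟨s₁, hs₁⟩ := fullref_nonempty T₁
  obtain ⟨s₂, hs₂⟩ := fullref_nonempty T₂
  have hB : (0:ℝ) ≤ ((RTree.setD T₁ T₂).card : ℝ) + ((RTree.setR1 T₁ T₂).card : ℝ) +
      ((RTree.setR2 T₁ T₂).card : ℝ) + ((RTree.setU T₁ T₂).card : ℝ) := by positivity
  apply max_le
  · apply Real.iSup_le _ hB
    rintro ⟨t₁, ht₁⟩
    exact ciInf_le_of_le ⟨0, by rintro x ⟨i, rfl⟩; exact tripletDist_nonneg _ _⟩
      ⟨s₂, hs₂⟩ (tripletDist_le ht₁ hs₂)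
  · apply Real.iSup_le _ hB
    rintro ⟨t₂, ht₂⟩
    exact ciInf_le_of_le ⟨0, by rintro x ⟨i, rfl⟩; exact tripletDist_nonneg _ _⟩
      ⟨s₁, hs₁⟩ (tripletDist_le hs₁ ht₂)

lemma rooted_dHaus_ge (T₁ T₂ : RTree n) :
    ((RTree.setD T₁ T₂).card : ℝ) + (((RTree.setR1 T₁ T₂).card : ℝ) +
      ((RTree.setR2 T₁ T₂).card : ℝ)) / 3 ≤ RTree.dHaus T₁ T₂ := by
  haveI h1 : Nonempty ↥(T₁.FullRef) := (fullref_nonempty T₁).to_subtype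
  haveI h2 : Nonempty ↥(T₂.FullRef) := (fullref_nonempty T₂).to_subtype
  haveI : Finite (RTree n) := Finite.of_fintype _
  obtain ⟨t₂, ht₂, hbound2⟩ := exists_t₂_adversary T₁ T₂
  obtain ⟨t₁, ht₁, hbound1⟩ := exists_t₁_adversary T₁ T₂
  have hc2 : ((RTree.setD T₁ T₂).card : ℝ) + 2/3 * ((RTree.setR1 T₁ T₂).card : ℝ) ≤
      ⨆ t₂' : T₂.FullRef, ⨅ t₁' : T₁.FullRef, RTree.tripletDist t₁'.1 t₂'.1 := by
    apply le_ciSup_of_le (Set.Finite.bddAbove (Set.finite_range _)) ⟨t₂, ht₂⟩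
    apply le_ciInf
    rintro ⟨t₁', ht₁'⟩
    have := hbound2 t₁' ht₁'
    linarith
  have hc1 : ((RTree.setD T₁ T₂).card : ℝ) + 2/3 * ((RTree.setR2 T₁ T₂).card : ℝ) ≤
      ⨆ t₁' : T₁.FullRef, ⨅ t₂' : T₂.FullRef, RTree.tripletDist t₁'.1 t₂'.1 := by
    apply le_ciSup_of_le (Set.Finite.bddAbove (Set.finite_range _)) ⟨t₁, ht₁⟩
    apply le_ciInf
    rintro ⟨t₂', ht₂'⟩
    have := hbound1 t₂' ht₂'
    linarith
  rw [RTree.dHaus]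
  have hm1 := le_max_left
    (⨆ t₁' : T₁.FullRef, ⨅ t₂' : T₂.FullRef, RTree.tripletDist t₁'.1 t₂'.1)
    (⨆ t₂' : T₂.FullRef, ⨅ t₁' : T₁.FullRef, RTree.tripletDist t₁'.1 t₂'.1)
  have hm2 := le_max_right
    (⨆ t₁' : T₁.FullRef, ⨅ t₂' : T₂.FullRef, RTree.tripletDist t₁'.1 t₂'.1)
    (⨆ t₂' : T₂.FullRef, ⨅ t₁' : T₁.FullRef, RTree.tripletDist t₁'.1 t₂'.1)
  linarith

lemma rooted_final {β p : ℝ} (hβ : 0 < β) (hp0 : 0 < p) (hp1 : p ≤ 1) (T₁ T₂ : RTree n)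
    (hU : ((RTree.setU T₁ T₂).card : ℝ) ≤
      β * (((RTree.setD T₁ T₂).card : ℝ) + ((RTree.setR1 T₁ T₂).card : ℝ) +
        ((RTree.setR2 T₁ T₂).card : ℝ))) :
    (1/3) * RTree.pdist p T₁ T₂ ≤ RTree.dHaus T₁ T₂ ∧
      RTree.dHaus T₁ T₂ ≤ ((1+β)/p) * RTree.pdist p T₁ T₂ := by
  have hD : (0:ℝ) ≤ ((RTree.setD T₁ T₂).card : ℝ) := Nat.cast_nonneg _
  have hR1 : (0:ℝ) ≤ ((RTree.setR1 T₁ T₂).card : ℝ) := Nat.cast_nonneg _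
  have hR2 : (0:ℝ) ≤ ((RTree.setR2 T₁ T₂).card : ℝ) := Nat.cast_nonneg _
  have hUc : (0:ℝ) ≤ ((RTree.setU T₁ T₂).card : ℝ) := Nat.cast_nonneg _
  have hpdist : RTree.pdist p T₁ T₂ = ((RTree.setD T₁ T₂).card : ℝ) +
      p * (((RTree.setR1 T₁ T₂).card : ℝ) + ((RTree.setR2 T₁ T₂).card : ℝ)) := rfl
  constructor
  · have hge := rooted_dHaus_ge T₁ T₂
    rw [hpdist]
    nlinarith
  · have hle := rooted_dHaus_le T₁ T₂
    rw [hpdist, div_mul_eq_mul_div, le_div_iff₀ hp0]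
    have hS : RTree.dHaus T₁ T₂ ≤ (1+β) * (((RTree.setD T₁ T₂).card : ℝ) +
        ((RTree.setR1 T₁ T₂).card : ℝ) + ((RTree.setR2 T₁ T₂).card : ℝ)) := by nlinarith
    have h2 := mul_le_mul_of_nonneg_right hS (le_of_lt hp0)
    have h3' : (0:ℝ) ≤ ((RTree.setD T₁ T₂).card : ℝ) * (1 - p) :=
      mul_nonneg hD (by linarith)
    have h3 : (0:ℝ) ≤ (1+β) * (((RTree.setD T₁ T₂).card : ℝ) -
        p * ((RTree.setD T₁ T₂).card : ℝ)) := by nlinarith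
    nlinarith

end RootedHaus
section UnrootedApp
variable {n : ℕ}

lemma mem_quartets {X : Finset (Fin n)} : X ∈ quartets n ↔ X.card = 4 := by
  rw [quartets, Finset.mem_powersetCard]
  exact ⟨fun h => h.2, fun h => ⟨Finset.subset_univ X, h⟩⟩

lemma quartet_n4 {X : Finset (Fin n)} (hX : X.card = 4) : 4 ≤ n := by
  have := Finset.card_le_card (Finset.subset_univ X)
  rwa [Finset.card_univ, Fintype.card_fin, hX] at this

lemma famResolvedU_mono {F G : Finset (Finset (Fin n))} (hFG : F ⊆ G)
    {X : Finset (Fin n)} : famResolvedU F X → famResolvedU G X := by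
  rintro ⟨C, hC, h2⟩
  exact ⟨C, hFG hC, h2⟩

lemma mem_famRestrictU {F : Finset (Finset (Fin n))} {X A : Finset (Fin n)} :
    A ∈ famRestrictU F X ↔ (∃ C ∈ F, C ∩ X = A) ∧ (A ≠ ∅ ∧ A ≠ X) := by
  rw [famRestrictU, Finset.mem_filter, Finset.mem_image]

/-- two resolving sides of a quartet agree or are complementary -/
lemma pairU_unique {G : Finset (Finset (Fin n))}
    (hcompat : ∀ A ∈ G, ∀ B ∈ G, A ⊆ B ∨ B ⊆ A ∨ A ∩ B = ∅ ∨ A ∪ B = Finset.univ)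
    {X : Finset (Fin n)} (hX4 : X.card = 4) {A B : Finset (Fin n)}
    (hA : A ∈ G) (hB : B ∈ G) (hA2 : (A ∩ X).card = 2) (hB2 : (B ∩ X).card = 2) :
    A ∩ X = B ∩ X ∨ A ∩ X = X \ (B ∩ X) := by
  rcases hcompat A hA B hB with h' | h' | h' | h'
  · exact Or.inl (Finset.eq_of_subset_of_card_le
      (Finset.inter_subset_inter h' (Finset.Subset.refl X)) (by omega))
  · exact Or.inl (Finset.eq_of_subset_of_card_le
      (Finset.inter_subset_inter h' (Finset.Subset.refl X)) (by omega)).symm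
  · right
    apply Finset.eq_of_subset_of_card_le
    · intro x hx
      rw [Finset.mem_inter] at hx
      rw [Finset.mem_sdiff]
      refine ⟨hx.2, ?_⟩
      intro hxB
      have : x ∈ A ∩ B := Finset.mem_inter.2 ⟨hx.1, (Finset.mem_inter.1 hxB).1⟩
      rw [h'] at this; simp at this
    · have : (X \ (B ∩ X)).card = X.card - (B ∩ X).card :=
        Finset.card_sdiff_of_subset Finset.inter_subset_right
      omega
  · right
    have hsub : X \ (A ∩ X) ⊆ B ∩ X := by
      intro x hx
      rw [Finset.mem_sdiff] at hx
      obtain ⟨hxX, hxA⟩ := hx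
      have hxB : x ∈ B := by
        have : x ∈ A ∪ B := h' ▸ Finset.mem_univ x
        rcases Finset.mem_union.1 this with h'' | h''
        · exact absurd (Finset.mem_inter.2 ⟨h'', hxX⟩) hxA
        · exact h''
      exact Finset.mem_inter.2 ⟨hxB, hxX⟩
    have hcard : (X \ (A ∩ X)).card = 2 := by
      have : (X \ (A ∩ X)).card = X.card - (A ∩ X).card :=
        Finset.card_sdiff_of_subset Finset.inter_subset_right
      omega
    have : X \ (A ∩ X) = B ∩ X := Finset.eq_of_subset_of_card_le hsub (by omega)
    rw [← this, Finset.sdiff_sdiff_eq_self Finset.inter_subset_right]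

lemma restrictU_stable {F G : Finset (Finset (Fin n))} (hFG : F ⊆ G)
    (hFtriv : ∀ x : Fin n, ({x} : Finset (Fin n)) = Finset.univ ∨ {x} ∈ F)
    (hFcompl : ∀ A ∈ F, Finset.univ \ A ∈ F)
    (hGcompat : ∀ A ∈ G, ∀ B ∈ G, A ⊆ B ∨ B ⊆ A ∨ A ∩ B = ∅ ∨ A ∪ B = Finset.univ)
    {X : Finset (Fin n)} (hX4 : X.card = 4) (hres : famResolvedU F X) :
    famRestrictU G X = famRestrictU F X := by
  have hn4 : 4 ≤ n := quartet_n4 hX4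
  have hFsing : ∀ x : Fin n, ({x} : Finset (Fin n)) ∈ F := by
    intro x
    rcases hFtriv x with h' | h'
    · exfalso
      have := congrArg Finset.card h'
      rw [Finset.card_singleton, Finset.card_univ, Fintype.card_fin] at this
      omega
    · exact h'
  apply Finset.Subset.antisymm
  · intro A hA
    rw [mem_famRestrictU] at hA ⊢
    obtain ⟨⟨C, hC, rfl⟩, hAne, hAnX⟩ := hA
    refine ⟨?_, hAne, hAnX⟩
    have hle : (C ∩ X).card ≤ 4 := hX4 ▸ Finset.card_le_card Finset.inter_subset_right
    have h1 : 1 ≤ (C ∩ X).card := Finset.card_pos.2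
      (Finset.nonempty_iff_ne_empty.2 hAne)
    have hne4 : (C ∩ X).card ≠ 4 := by
      intro hcon
      exact hAnX (Finset.eq_of_subset_of_card_le Finset.inter_subset_right (by omega))
    have hcases : (C ∩ X).card = 1 ∨ (C ∩ X).card = 2 ∨ (C ∩ X).card = 3 := by omega
    rcases hcases with h' | h' | h'
    · obtain ⟨y, hy⟩ := Finset.card_eq_one.1 h'
      have hyX : y ∈ X := by
        have : y ∈ C ∩ X := hy ▸ Finset.mem_singleton_self y
        exact (Finset.mem_inter.1 this).2
      exact ⟨{y}, hFsing y, by rw [hy, Finset.singleton_inter_of_mem hyX]⟩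
    · obtain ⟨B, hB, hB2⟩ := hres
      rcases pairU_unique hGcompat hX4 hC (hFG hB) h' hB2 with h'' | h''
      · exact ⟨B, hB, h''.symm⟩
      · refine ⟨Finset.univ \ B, hFcompl B hB, ?_⟩
        rw [h'']
        ext z
        constructor
        · intro hz
          rw [Finset.mem_inter, Finset.mem_sdiff] at hz
          rw [Finset.mem_sdiff]
          exact ⟨hz.2, fun hcon => hz.1.2 (Finset.mem_inter.1 hcon).1⟩
        · intro hz
          rw [Finset.mem_sdiff] at hz
          rw [Finset.mem_inter, Finset.mem_sdiff]
          exact ⟨⟨Finset.mem_univ z, fun hcon => hz.2 (Finset.mem_inter.2 ⟨hcon, hz.1⟩)⟩,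
            hz.1⟩
    · -- card 3 : complement of a singleton within X
      have hsd : (X \ (C ∩ X)).card = 1 := by
        have : (X \ (C ∩ X)).card = X.card - (C ∩ X).card :=
          Finset.card_sdiff_of_subset Finset.inter_subset_right
        omega
      obtain ⟨y, hy⟩ := Finset.card_eq_one.1 hsd
      refine ⟨Finset.univ \ {y}, hFcompl _ (hFsing y), ?_⟩
      have h1' : C ∩ X = X \ {y} := by
        rw [← hy, Finset.sdiff_sdiff_eq_self Finset.inter_subset_right]
      rw [h1']
      ext z
      simp only [Finset.mem_inter, Finset.mem_sdiff, Finset.mem_univ, true_and,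
        Finset.mem_singleton]
      tauto
  · intro A hA
    rw [mem_famRestrictU] at hA ⊢
    obtain ⟨⟨C, hC, rfl⟩, hcond⟩ := hA
    exact ⟨⟨C, hFG hC, rfl⟩, hcond⟩

/-- the laminar system obtained by rooting a split system at `x₀` -/
noncomputable def Lroot (F : Finset (Finset (Fin n))) (x₀ : Fin n) :
    Finset (Finset (Fin n)) :=
  F.filter (fun A => x₀ ∉ A)

lemma Lroot_lam (T : UTree n) (x₀ : Fin n) (hn : 2 ≤ n) :
    Lam (Finset.univ.erase x₀) (Lroot T.splits x₀) := by
  have hx₀univ : ({x₀} : Finset (Fin n)) ≠ Finset.univ := by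
    intro hcon
    have := congrArg Finset.card hcon
    rw [Finset.card_singleton, Finset.card_univ, Fintype.card_fin] at this
    omega
  have hx₀mem : ({x₀} : Finset (Fin n)) ∈ T.splits :=
    (T.trivial_mem x₀).resolve_left hx₀univ
  constructor
  · rw [Lroot, Finset.mem_filter]
    constructor
    · rw [Finset.erase_eq]
      exact T.compl_mem _ hx₀mem
    · rw [Finset.erase_eq]
      simp
  · intro y hy
    have hyx₀ : y ≠ x₀ := (Finset.mem_erase.1 hy).1
    rw [Lroot, Finset.mem_filter]
    refine ⟨?_, by simp [Ne.symm hyx₀]⟩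
    refine (T.trivial_mem y).resolve_left ?_
    intro hcon
    have := congrArg Finset.card hcon
    rw [Finset.card_singleton, Finset.card_univ, Fintype.card_fin] at this
    omega
  · intro hcon
    rw [Lroot, Finset.mem_filter] at hcon
    exact T.empty_not_mem hcon.1
  · intro C hC
    rw [Lroot, Finset.mem_filter] at hC
    intro z hz
    exact Finset.mem_erase.2 ⟨fun hcon => hC.2 (hcon ▸ hz), Finset.mem_univ z⟩
  · intro C hC D hD
    rw [Lroot, Finset.mem_filter] at hC hD
    rcases T.compat C hC.1 D hD.1 with h' | h' | h' | h'
    · exact Or.inl h'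
    · exact Or.inr (Or.inl h')
    · exact Or.inr (Or.inr h')
    · exfalso
      have : x₀ ∈ C ∪ D := h' ▸ Finset.mem_univ x₀
      rcases Finset.mem_union.1 this with h'' | h''
      · exact hC.2 h''
      · exact hD.2 h''

/-- the split system generated by a laminar system rooted at `x₀` -/
noncomputable def splitsOf (L' : Finset (Finset (Fin n))) : Finset (Finset (Fin n)) :=
  L' ∪ L'.image (Finset.univ \ ·)

lemma splitsOf_utree {x₀ : Fin n} {L' : Finset (Finset (Fin n))}
    (hLam : Lam (Finset.univ.erase x₀) L') :
    (∅ ∉ splitsOf L') ∧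
    (∀ x : Fin n, ({x} : Finset (Fin n)) = Finset.univ ∨ {x} ∈ splitsOf L') ∧
    (∀ A ∈ splitsOf L', Finset.univ \ A ∈ splitsOf L') ∧
    (∀ A ∈ splitsOf L', ∀ B ∈ splitsOf L',
      A ⊆ B ∨ B ⊆ A ∨ A ∩ B = ∅ ∨ A ∪ B = Finset.univ) := by
  have hx₀ : ∀ A ∈ L', x₀ ∉ A := by
    intro A hA hcon
    have := hLam.sub A hA hcon
    simp at this
  have hmemiff : ∀ A, A ∈ splitsOf L' ↔ A ∈ L' ∨ ∃ B ∈ L', A = Finset.univ \ B := by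
    intro A
    rw [splitsOf, Finset.mem_union, Finset.mem_image]
    constructor
    · rintro (h' | ⟨B, hB, rfl⟩)
      · exact Or.inl h'
      · exact Or.inr ⟨B, hB, rfl⟩
    · rintro (h' | ⟨B, hB, rfl⟩)
      · exact Or.inl h'
      · exact Or.inr ⟨B, hB, rfl⟩
  have hcomplmem : ∀ B ∈ L', Finset.univ \ B ∈ splitsOf L' := by
    intro B hB
    exact (hmemiff _).2 (Or.inr ⟨B, hB, rfl⟩)
  refine ⟨?_, ?_, ?_, ?_⟩
  · intro hcon
    rcases (hmemiff ∅).1 hcon with h' | ⟨B, hB, hBeq⟩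
    · exact hLam.nemp h'
    · have : x₀ ∈ (∅ : Finset (Fin n)) := by
        rw [hBeq, Finset.mem_sdiff]
        exact ⟨Finset.mem_univ x₀, hx₀ B hB⟩
      simp at this
  · intro x
    by_cases hx : x = x₀
    · rw [hx]
      right
      have : ({x₀} : Finset (Fin n)) = Finset.univ \ (Finset.univ.erase x₀) := by
        ext z
        simp only [Finset.mem_singleton, Finset.mem_sdiff, Finset.mem_univ, true_and,
          Finset.mem_erase, not_and]
        constructor
        · rintro rfl
          intro h'
          exact absurd rfl h'
        · intro h'
          by_contra hne
          exact h' hne trivial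
      rw [this]
      exact hcomplmem _ hLam.top
    · right
      exact Finset.mem_union_left _ (hLam.sing x (Finset.mem_erase.2 ⟨hx, Finset.mem_univ x⟩))
  · intro A hA
    rcases (hmemiff A).1 hA with h' | ⟨B, hB, rfl⟩
    · exact hcomplmem _ h'
    · rw [Finset.sdiff_sdiff_eq_self (Finset.subset_univ B)]
      exact Finset.mem_union_left _ hB
  · intro A hA B hB
    rcases (hmemiff A).1 hA with hA' | ⟨A', hA', rfl⟩ <;>
      rcases (hmemiff B).1 hB with hB' | ⟨B', hB', rfl⟩
    · rcases hLam.lam A hA' B hB' with h' | h' | h'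
      · exact Or.inl h'
      · exact Or.inr (Or.inl h')
      · exact Or.inr (Or.inr (Or.inl h'))
    · rcases hLam.lam A hA' B' hB' with h' | h' | h'
      · -- A ⊆ B' : A ∩ (univ \ B') = ∅
        refine Or.inr (Or.inr (Or.inl ?_))
        rw [Finset.eq_empty_iff_forall_notMem]
        intro z hz
        rw [Finset.mem_inter, Finset.mem_sdiff] at hz
        exact hz.2.2 (h' hz.1)
      · -- B' ⊆ A : A ∪ (univ \ B') = univ
        refine Or.inr (Or.inr (Or.inr ?_))
        apply Finset.eq_univ_of_forall
        intro z
        rw [Finset.mem_union, Finset.mem_sdiff]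
        by_cases hzB : z ∈ B'
        · exact Or.inl (h' hzB)
        · exact Or.inr ⟨Finset.mem_univ z, hzB⟩
      · -- A ∩ B' = ∅ : A ⊆ univ \ B'
        refine Or.inl ?_
        intro z hz
        rw [Finset.mem_sdiff]
        refine ⟨Finset.mem_univ z, fun hcon => ?_⟩
        have : z ∈ A ∩ B' := Finset.mem_inter.2 ⟨hz, hcon⟩
        rw [h'] at this; simp at this
    · rcases hLam.lam A' hA' B hB' with h' | h' | h'
      · refine Or.inr (Or.inr (Or.inr ?_))
        apply Finset.eq_univ_of_forall
        intro z
        rw [Finset.mem_union, Finset.mem_sdiff]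
        by_cases hzA : z ∈ A'
        · exact Or.inr (h' hzA)
        · exact Or.inl ⟨Finset.mem_univ z, hzA⟩
      · refine Or.inr (Or.inr (Or.inl ?_))
        rw [Finset.eq_empty_iff_forall_notMem]
        intro z hz
        rw [Finset.mem_inter, Finset.mem_sdiff] at hz
        exact hz.1.2 (h' hz.2)
      · refine Or.inr (Or.inl ?_)
        intro z hz
        rw [Finset.mem_sdiff]
        refine ⟨Finset.mem_univ z, fun hcon => ?_⟩
        have : z ∈ A' ∩ B := Finset.mem_inter.2 ⟨hcon, hz⟩
        rw [h'] at this; simp at this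
    · rcases hLam.lam A' hA' B' hB' with h' | h' | h'
      · refine Or.inr (Or.inl ?_)
        intro z hz
        rw [Finset.mem_sdiff] at hz ⊢
        exact ⟨hz.1, fun hcon => hz.2 (h' hcon)⟩
      · refine Or.inl ?_
        intro z hz
        rw [Finset.mem_sdiff] at hz ⊢
        exact ⟨hz.1, fun hcon => hz.2 (h' hcon)⟩
      · refine Or.inr (Or.inr (Or.inr ?_))
        apply Finset.eq_univ_of_forall
        intro z
        rw [Finset.mem_union, Finset.mem_sdiff, Finset.mem_sdiff]
        by_cases hzA : z ∈ A'
        · refine Or.inr ⟨Finset.mem_univ z, fun hcon => ?_⟩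
          have : z ∈ A' ∩ B' := Finset.mem_inter.2 ⟨hzA, hcon⟩
          rw [h'] at this; simp at this
        · exact Or.inl ⟨Finset.mem_univ z, hzA⟩

end UnrootedApp
section UnrootedAdv
variable {n : ℕ}

noncomputable def recX (x₀ : Fin n) (W : Finset (Fin n)) : Finset (Fin n) :=
  if W.card = 3 then insert x₀ W else W

noncomputable def fU (F₁ : Finset (Finset (Fin n))) (x₀ : Fin n)
    (W : Finset (Fin n)) : Finset (Fin n) :=
  if x₀ ∈ fpair F₁ (recX x₀ W) then ((recX x₀ W) \ fpair F₁ (recX x₀ W)).erase x₀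
  else fpair F₁ (recX x₀ W)

lemma recX_erase {x₀ : Fin n} {X : Finset (Fin n)} (hX4 : X.card = 4) :
    recX x₀ (X.erase x₀) = X := by
  rw [recX]
  by_cases hx : x₀ ∈ X
  · rw [if_pos (by rw [Finset.card_erase_of_mem hx, hX4]), Finset.insert_erase hx]
  · rw [Finset.erase_eq_of_notMem hx, if_neg (by omega)]

lemma inter_erase_eq {E X : Finset (Fin n)} {x₀ : Fin n} (hx : x₀ ∉ E) :
    E ∩ (X.erase x₀) = E ∩ X := by
  ext z
  simp only [Finset.mem_inter, Finset.mem_erase]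
  constructor
  · rintro ⟨hz, _, hzX⟩
    exact ⟨hz, hzX⟩
  · rintro ⟨hz, hzX⟩
    exact ⟨hz, fun hcon => hx (hcon ▸ hz), hzX⟩

lemma compl_inter_eq {E X : Finset (Fin n)} :
    (Finset.univ \ E) ∩ X = X \ (E ∩ X) := by
  ext z
  simp only [Finset.mem_inter, Finset.mem_sdiff, Finset.mem_univ, true_and]
  tauto

lemma erase_injOn_quartets {x₀ : Fin n} {R : Finset (Finset (Fin n))}
    (hR : R ⊆ quartets n) :
    Set.InjOn (fun X : Finset (Fin n) => X.erase x₀) ↑R := by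
  intro X hX X' hX' heq
  simp only at heq
  have h4 : X.card = 4 := mem_quartets.1 (hR hX)
  have h4' : X'.card = 4 := mem_quartets.1 (hR hX')
  have := recX_erase (x₀ := x₀) h4
  rw [← this, heq, recX_erase h4']

lemma exists_adversaryU (hn : 2 ≤ n) (T : UTree n) (F₁ : Finset (Finset (Fin n)))
    (R : Finset (Finset (Fin n))) (hR : R ⊆ quartets n)
    (hRun : ∀ X ∈ R, ¬ famResolvedU T.splits X)
    (hRres : ∀ X ∈ R, famResolvedU F₁ X) :
    ∃ t : UTree n, t ∈ T.FullRef ∧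
      3 * (R.filter (fun X => famRestrictU t.splits X = famRestrictU F₁ X)).card
        ≤ R.card := by
  set x₀ : Fin n := ⟨0, by omega⟩ with hx₀def
  have hLam := Lroot_lam T x₀ hn
  set R' := R.image (fun X => X.erase x₀) with hR'def
  have hR'facts : ∀ W ∈ R', W ⊆ Finset.univ.erase x₀ ∧ (W.card = 3 ∨ W.card = 4) ∧
      ∀ C ∈ Lroot T.splits x₀, (C ∩ W).card ≠ 2 := by
    intro W hW
    obtain ⟨X, hXR, rfl⟩ := Finset.mem_image.1 hW
    have hX4 : X.card = 4 := mem_quartets.1 (hR hXR)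
    refine ⟨Finset.erase_subset_erase x₀ (Finset.subset_univ X), ?_, ?_⟩
    · by_cases hx : x₀ ∈ X
      · left; rw [Finset.card_erase_of_mem hx, hX4]
      · right; rw [Finset.erase_eq_of_notMem hx, hX4]
    · intro C hC
      rw [Lroot, Finset.mem_filter] at hC
      rw [inter_erase_eq hC.2]
      have := hRun X hXR
      rw [famResolvedU] at this
      push_neg at this
      exact this C hC.1
  obtain ⟨L', hLam', hBin, hsub, hcount⟩ := count_main hLam (fU F₁ x₀) R' hR'facts
  obtain ⟨hne, htriv, hcompl, hcompat⟩ := splitsOf_utree hLam'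
  set t : UTree n := ⟨splitsOf L', hne, htriv, hcompl, hcompat⟩ with htdef
  have hx₀L' : ∀ E ∈ L', x₀ ∉ E := by
    intro E hE hcon
    have := hLam'.sub E hE hcon
    simp at this
  have htsplits : t.splits = splitsOf L' := rfl
  have hTt : T.splits ⊆ t.splits := by
    intro A hA
    rw [htsplits, splitsOf, Finset.mem_union]
    by_cases hx : x₀ ∈ A
    · right
      have h1 : Finset.univ \ A ∈ Lroot T.splits x₀ := by
        rw [Lroot, Finset.mem_filter]
        exact ⟨T.compl_mem A hA, by simp [hx]⟩
      refine Finset.mem_image.2 ⟨Finset.univ \ A, hsub h1, ?_⟩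
      rw [Finset.sdiff_sdiff_eq_self (Finset.subset_univ A)]
    · left
      exact hsub (by rw [Lroot, Finset.mem_filter]; exact ⟨hA, hx⟩)
  have htfull : t.FullyResolved := by
    intro X hX
    have hX4 : X.card = 4 := mem_quartets.1 hX
    by_cases hx : x₀ ∈ X
    · obtain ⟨E, hE, hE2⟩ := bin_resolves hLam' hBin
        (Finset.erase_subset_erase x₀ (Finset.subset_univ X))
        (by rw [Finset.card_erase_of_mem hx, hX4]; omega)
      refine ⟨E, Finset.mem_union_left _ hE, ?_⟩
      rw [← inter_erase_eq (X := X) (hx₀L' E hE)]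
      exact hE2
    · have hXV : X ⊆ Finset.univ.erase x₀ := by
        intro z hz
        exact Finset.mem_erase.2 ⟨fun hcon => hx (hcon ▸ hz), Finset.mem_univ z⟩
      obtain ⟨E, hE, hE2⟩ := bin_resolves hLam' hBin hXV (by omega)
      exact ⟨E, Finset.mem_union_left _ hE, hE2⟩
  refine ⟨t, ⟨htfull, hTt⟩, ?_⟩
  -- transfer the count
  have hmap : ∀ X ∈ R.filter (fun X => famRestrictU t.splits X = famRestrictU F₁ X),
      X.erase x₀ ∈ R'.filter (fun W => ∃ E ∈ L', (E ∩ W).card = 2 ∧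
        (E ∩ W = fU F₁ x₀ W ∨ E ∩ W = W \ fU F₁ x₀ W)) := by
    intro X hX
    rw [Finset.mem_filter] at hX
    obtain ⟨hXR, heq⟩ := hX
    have hX4 : X.card = 4 := mem_quartets.1 (hR hXR)
    rw [Finset.mem_filter]
    refine ⟨Finset.mem_image_of_mem _ hXR, ?_⟩
    have hrec : recX x₀ (X.erase x₀) = X := recX_erase hX4
    have hres1 := hRres X hXR
    have hres1' : famResolved F₁ X := hres1
    obtain ⟨⟨A, hAF, hAeq⟩, hA2⟩ := fpair_spec hres1'
    have hPsub : fpair F₁ X ⊆ X := hAeq ▸ Finset.inter_subset_right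
    have hPmem : fpair F₁ X ∈ famRestrictU F₁ X := by
      rw [mem_famRestrictU]
      refine ⟨⟨A, hAF, hAeq⟩, ?_, ?_⟩
      · intro hcon; rw [hcon] at hA2; simp at hA2
      · intro hcon; rw [hcon] at hA2; omega
    rw [← heq, mem_famRestrictU] at hPmem
    obtain ⟨⟨E', hE't, hE'eq⟩, hPne, hPnX⟩ := hPmem
    have hfUeq : fU F₁ x₀ (X.erase x₀) =
        if x₀ ∈ fpair F₁ X then (X \ fpair F₁ X).erase x₀ else fpair F₁ X := by
      rw [fU, hrec]
    rw [htsplits, splitsOf, Finset.mem_union] at hE't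
    rcases hE't with hE'L | hE'img
    · -- E' ∈ L'
      have hx₀E' : x₀ ∉ E' := hx₀L' E' hE'L
      have hx₀P : x₀ ∉ fpair F₁ X := by
        rw [← hE'eq]
        intro hcon
        exact hx₀E' (Finset.mem_inter.1 hcon).1
      refine ⟨E', hE'L, ?_, Or.inl ?_⟩
      · rw [inter_erase_eq hx₀E', hE'eq]; exact hA2
      · rw [inter_erase_eq hx₀E', hE'eq, hfUeq, if_neg hx₀P]
    · obtain ⟨E, hEL, hEeq⟩ := Finset.mem_image.1 hE'img
      have hx₀E : x₀ ∉ E := hx₀L' E hEL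
      have hE'X : E' ∩ X = X \ (E ∩ X) := by rw [← hEeq]; exact compl_inter_eq
      have hPval : fpair F₁ X = X \ (E ∩ X) := by rw [← hE'eq, hE'X]
      have hEX : E ∩ X = X \ fpair F₁ X := by
        rw [hPval]
        exact (Finset.sdiff_sdiff_eq_self Finset.inter_subset_right).symm
      have hEXcard : (E ∩ X).card = 2 := by
        rw [hEX, Finset.card_sdiff_of_subset hPsub, hX4]
        have : (fpair F₁ X).card = 2 := hAeq ▸ hA2
        omega
      by_cases hx₀P : x₀ ∈ fpair F₁ X
      · have hx₀nX : x₀ ∉ X \ fpair F₁ X := fun hcon => (Finset.mem_sdiff.1 hcon).2 hx₀P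
        refine ⟨E, hEL, ?_, Or.inl ?_⟩
        · rw [inter_erase_eq hx₀E, hEXcard]
        · rw [inter_erase_eq hx₀E, hEX, hfUeq, if_pos hx₀P,
            Finset.erase_eq_of_notMem hx₀nX]
      · by_cases hx₀X : x₀ ∈ X
        · exfalso
          have : x₀ ∈ E ∩ X := by
            rw [hEX, Finset.mem_sdiff]
            exact ⟨hx₀X, hx₀P⟩
          exact hx₀E (Finset.mem_inter.1 this).1
        · refine ⟨E, hEL, ?_, Or.inr ?_⟩
          · rw [inter_erase_eq hx₀E, hEXcard]
          · rw [inter_erase_eq hx₀E, hEX, hfUeq, if_neg hx₀P,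
              Finset.erase_eq_of_notMem hx₀X]
  have hinj := erase_injOn_quartets (x₀ := x₀) hR
  have hcard1 : (R.filter (fun X => famRestrictU t.splits X = famRestrictU F₁ X)).card ≤
      (R'.filter (fun W => ∃ E ∈ L', (E ∩ W).card = 2 ∧
        (E ∩ W = fU F₁ x₀ W ∨ E ∩ W = W \ fU F₁ x₀ W))).card := by
    apply Finset.card_le_card_of_injOn (fun X => X.erase x₀) (fun X hX => hmap X hX)
    exact hinj.mono (by
      intro X hX
      exact Finset.mem_coe.2 (Finset.mem_of_mem_filter X (Finset.mem_coe.1 hX)))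
  have hcard2 : R'.card ≤ R.card := Finset.card_image_le
  omega

lemma fullrefU_nonempty (T : UTree n) : T.FullRef.Nonempty := by
  by_cases hn : 2 ≤ n
  · obtain ⟨t, ht, _⟩ := exists_adversaryU hn T T.splits ∅ (Finset.empty_subset _)
      (fun X hX => absurd hX (Finset.notMem_empty X))
      (fun X hX => absurd hX (Finset.notMem_empty X))
    exact ⟨t, ht⟩
  · refine ⟨T, ?_, Finset.Subset.refl _⟩
    intro X hX
    have hX4 : X.card = 4 := mem_quartets.1 hX
    have := quartet_n4 hX4
    omega

end UnrootedAdv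
section UnrootedHaus
variable {n : ℕ}

lemma quartets_small (h : n < 4) : quartets n = ∅ := by
  rw [Finset.eq_empty_iff_forall_notMem]
  intro X hX
  have := quartet_n4 (mem_quartets.1 hX)
  omega

lemma quartetDist_nonneg (t₁ t₂ : UTree n) : 0 ≤ UTree.quartetDist t₁ t₂ :=
  Nat.cast_nonneg _

lemma setDU_mono_up {T₁ T₂ t₁ t₂ : UTree n} (h₁ : t₁ ∈ T₁.FullRef)
    (h₂ : t₂ ∈ T₂.FullRef) : UTree.setD T₁ T₂ ⊆ UTree.setD t₁ t₂ := by
  intro X hX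
  rw [UTree.setD, famSetDU, Finset.mem_filter] at hX ⊢
  obtain ⟨hXt, hres1, hres2, hne⟩ := hX
  have hX4 : X.card = 4 := mem_quartets.1 hXt
  refine ⟨hXt, famResolvedU_mono h₁.2 hres1, famResolvedU_mono h₂.2 hres2, ?_⟩
  rw [restrictU_stable h₁.2 T₁.trivial_mem T₁.compl_mem t₁.compat hX4 hres1,
    restrictU_stable h₂.2 T₂.trivial_mem T₂.compl_mem t₂.compat hX4 hres2]
  exact hne

lemma setDU_upper {T₁ T₂ t₁ t₂ : UTree n} (h₁ : t₁ ∈ T₁.FullRef)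
    (h₂ : t₂ ∈ T₂.FullRef) :
    UTree.setD t₁ t₂ ⊆ ((UTree.setD T₁ T₂ ∪ UTree.setR1 T₁ T₂) ∪ UTree.setR2 T₁ T₂) ∪
      UTree.setU T₁ T₂ := by
  intro X hX
  rw [UTree.setD, famSetDU, Finset.mem_filter] at hX
  obtain ⟨hXt, hres1, hres2, hne⟩ := hX
  have hX4 : X.card = 4 := mem_quartets.1 hXt
  simp only [Finset.mem_union, UTree.setD, UTree.setR1, UTree.setR2, UTree.setU,
    famSetDU, famSetR1U, famSetR2U, famSetUU, Finset.mem_filter]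
  by_cases hT1 : famResolvedU T₁.splits X <;> by_cases hT2 : famResolvedU T₂.splits X
  · refine Or.inl (Or.inl (Or.inl ⟨hXt, hT1, hT2, ?_⟩))
    intro hcon
    apply hne
    rw [restrictU_stable h₁.2 T₁.trivial_mem T₁.compl_mem t₁.compat hX4 hT1,
      restrictU_stable h₂.2 T₂.trivial_mem T₂.compl_mem t₂.compat hX4 hT2]
    exact hcon
  · exact Or.inl (Or.inl (Or.inr ⟨hXt, hT1, hT2⟩))
  · exact Or.inl (Or.inr ⟨hXt, hT2, hT1⟩)
  · exact Or.inr ⟨hXt, hT1, hT2⟩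

lemma quartetDist_le {T₁ T₂ t₁ t₂ : UTree n} (h₁ : t₁ ∈ T₁.FullRef)
    (h₂ : t₂ ∈ T₂.FullRef) :
    UTree.quartetDist t₁ t₂ ≤ ((UTree.setD T₁ T₂).card : ℝ) +
      ((UTree.setR1 T₁ T₂).card : ℝ) + ((UTree.setR2 T₁ T₂).card : ℝ) +
      ((UTree.setU T₁ T₂).card : ℝ) := by
  have hA := Finset.card_le_card (setDU_upper h₁ h₂)
  have h3 := Finset.card_union_le ((UTree.setD T₁ T₂ ∪ UTree.setR1 T₁ T₂) ∪
    UTree.setR2 T₁ T₂) (UTree.setU T₁ T₂)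
  have h4 := Finset.card_union_le (UTree.setD T₁ T₂ ∪ UTree.setR1 T₁ T₂)
    (UTree.setR2 T₁ T₂)
  have h5 := Finset.card_union_le (UTree.setD T₁ T₂) (UTree.setR1 T₁ T₂)
  have hnat : (UTree.setD t₁ t₂).card ≤ (UTree.setD T₁ T₂).card +
      (UTree.setR1 T₁ T₂).card + (UTree.setR2 T₁ T₂).card + (UTree.setU T₁ T₂).card := by
    omega
  rw [UTree.quartetDist]
  exact_mod_cast hnat

lemma exists_t₂_adversaryU (T₁ T₂ : UTree n) :
    ∃ t₂ ∈ T₂.FullRef, ∀ t₁ ∈ T₁.FullRef,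
      3 * ((UTree.setD T₁ T₂).card : ℝ) + 2 * ((UTree.setR1 T₁ T₂).card : ℝ) ≤
        3 * UTree.quartetDist t₁ t₂ := by
  by_cases hn : 2 ≤ n
  · set R := UTree.setR1 T₁ T₂ with hRdef
    have hRsub : R ⊆ quartets n := Finset.filter_subset _ _
    have hRun : ∀ X ∈ R, ¬ famResolvedU T₂.splits X := by
      intro X hX
      rw [hRdef, UTree.setR1, famSetR1U, Finset.mem_filter] at hX
      exact hX.2.2
    have hRres : ∀ X ∈ R, famResolvedU T₁.splits X := by
      intro X hX
      rw [hRdef, UTree.setR1, famSetR1U, Finset.mem_filter] at hX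
      exact hX.2.1
    obtain ⟨t₂, ht₂, hcount⟩ := exists_adversaryU hn T₂ T₁.splits R hRsub hRun hRres
    refine ⟨t₂, ht₂, ?_⟩
    intro t₁ ht₁
    set Bad := R.filter (fun X => ¬ (famRestrictU t₂.splits X = famRestrictU T₁.splits X))
      with hBad
    have hBadcard : 2 * R.card ≤ 3 * Bad.card := by
      have h2 := Finset.card_filter_add_card_filter_not
        (s := R) (p := fun X => famRestrictU t₂.splits X = famRestrictU T₁.splits X)
      rw [← hBad] at h2
      omega
    have hincl : UTree.setD T₁ T₂ ∪ Bad ⊆ UTree.setD t₁ t₂ := by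
      apply Finset.union_subset (setDU_mono_up ht₁ ht₂)
      intro X hX
      rw [hBad, Finset.mem_filter] at hX
      obtain ⟨hXR, hne⟩ := hX
      rw [hRdef, UTree.setR1, famSetR1U, Finset.mem_filter] at hXR
      obtain ⟨hXt, hres1, hnres2⟩ := hXR
      have hX4 : X.card = 4 := mem_quartets.1 hXt
      rw [UTree.setD, famSetDU, Finset.mem_filter]
      refine ⟨hXt, famResolvedU_mono ht₁.2 hres1, ht₂.1 X hXt, ?_⟩
      rw [restrictU_stable ht₁.2 T₁.trivial_mem T₁.compl_mem t₁.compat hX4 hres1]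
      exact fun hcon => hne hcon.symm
    have hdisj : Disjoint (UTree.setD T₁ T₂) Bad := by
      rw [Finset.disjoint_left]
      intro X hX hX'
      rw [UTree.setD, famSetDU, Finset.mem_filter] at hX
      rw [hBad, Finset.mem_filter, hRdef, UTree.setR1, famSetR1U, Finset.mem_filter] at hX'
      exact hX'.1.2.2 hX.2.2.1
    have hcard : (UTree.setD T₁ T₂).card + Bad.card ≤ (UTree.setD t₁ t₂).card := by
      rw [← Finset.card_union_of_disjoint hdisj]
      exact Finset.card_le_card hincl
    rw [UTree.quartetDist]
    have hfin : 3 * (UTree.setD T₁ T₂).card + 2 * R.card ≤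
        3 * (UTree.setD t₁ t₂).card := by omega
    exact_mod_cast hfin
  · obtain ⟨t₂, ht₂⟩ := fullrefU_nonempty T₂
    refine ⟨t₂, ht₂, ?_⟩
    intro t₁ ht₁
    have hq : quartets n = ∅ := quartets_small (by omega)
    have hD : UTree.setD T₁ T₂ = ∅ :=
      Finset.subset_empty.1 (hq ▸ Finset.filter_subset _ _)
    have hR1 : UTree.setR1 T₁ T₂ = ∅ :=
      Finset.subset_empty.1 (hq ▸ Finset.filter_subset _ _)
    rw [hD, hR1]
    simp only [Finset.card_empty, Nat.cast_zero, mul_zero, add_zero]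
    have := quartetDist_nonneg t₁ t₂
    linarith

lemma exists_t₁_adversaryU (T₁ T₂ : UTree n) :
    ∃ t₁ ∈ T₁.FullRef, ∀ t₂ ∈ T₂.FullRef,
      3 * ((UTree.setD T₁ T₂).card : ℝ) + 2 * ((UTree.setR2 T₁ T₂).card : ℝ) ≤
        3 * UTree.quartetDist t₁ t₂ := by
  by_cases hn : 2 ≤ n
  · set R := UTree.setR2 T₁ T₂ with hRdef
    have hRsub : R ⊆ quartets n := Finset.filter_subset _ _
    have hRun : ∀ X ∈ R, ¬ famResolvedU T₁.splits X := by
      intro X hX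
      rw [hRdef, UTree.setR2, famSetR2U, Finset.mem_filter] at hX
      exact hX.2.2
    have hRres : ∀ X ∈ R, famResolvedU T₂.splits X := by
      intro X hX
      rw [hRdef, UTree.setR2, famSetR2U, Finset.mem_filter] at hX
      exact hX.2.1
    obtain ⟨t₁, ht₁, hcount⟩ := exists_adversaryU hn T₁ T₂.splits R hRsub hRun hRres
    refine ⟨t₁, ht₁, ?_⟩
    intro t₂ ht₂
    set Bad := R.filter (fun X => ¬ (famRestrictU t₁.splits X = famRestrictU T₂.splits X))
      with hBad
    have hBadcard : 2 * R.card ≤ 3 * Bad.card := by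
      have h2 := Finset.card_filter_add_card_filter_not
        (s := R) (p := fun X => famRestrictU t₁.splits X = famRestrictU T₂.splits X)
      rw [← hBad] at h2
      omega
    have hincl : UTree.setD T₁ T₂ ∪ Bad ⊆ UTree.setD t₁ t₂ := by
      apply Finset.union_subset (setDU_mono_up ht₁ ht₂)
      intro X hX
      rw [hBad, Finset.mem_filter] at hX
      obtain ⟨hXR, hne⟩ := hX
      rw [hRdef, UTree.setR2, famSetR2U, Finset.mem_filter] at hXR
      obtain ⟨hXt, hres2, hnres1⟩ := hXR
      have hX4 : X.card = 4 := mem_quartets.1 hXt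
      rw [UTree.setD, famSetDU, Finset.mem_filter]
      refine ⟨hXt, ht₁.1 X hXt, famResolvedU_mono ht₂.2 hres2, ?_⟩
      rw [restrictU_stable ht₂.2 T₂.trivial_mem T₂.compl_mem t₂.compat hX4 hres2]
      exact hne
    have hdisj : Disjoint (UTree.setD T₁ T₂) Bad := by
      rw [Finset.disjoint_left]
      intro X hX hX'
      rw [UTree.setD, famSetDU, Finset.mem_filter] at hX
      rw [hBad, Finset.mem_filter, hRdef, UTree.setR2, famSetR2U, Finset.mem_filter] at hX'
      exact hX'.1.2.2 hX.2.1
    have hcard : (UTree.setD T₁ T₂).card + Bad.card ≤ (UTree.setD t₁ t₂).card := by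
      rw [← Finset.card_union_of_disjoint hdisj]
      exact Finset.card_le_card hincl
    rw [UTree.quartetDist]
    have hfin : 3 * (UTree.setD T₁ T₂).card + 2 * R.card ≤
        3 * (UTree.setD t₁ t₂).card := by omega
    exact_mod_cast hfin
  · obtain ⟨t₁, ht₁⟩ := fullrefU_nonempty T₁
    refine ⟨t₁, ht₁, ?_⟩
    intro t₂ ht₂
    have hq : quartets n = ∅ := quartets_small (by omega)
    have hD : UTree.setD T₁ T₂ = ∅ :=
      Finset.subset_empty.1 (hq ▸ Finset.filter_subset _ _)
    have hR2 : UTree.setR2 T₁ T₂ = ∅ :=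
      Finset.subset_empty.1 (hq ▸ Finset.filter_subset _ _)
    rw [hD, hR2]
    simp only [Finset.card_empty, Nat.cast_zero, mul_zero, add_zero]
    have := quartetDist_nonneg t₁ t₂
    linarith

lemma unrooted_dHaus_le (T₁ T₂ : UTree n) :
    UTree.dHaus T₁ T₂ ≤ ((UTree.setD T₁ T₂).card : ℝ) + ((UTree.setR1 T₁ T₂).card : ℝ) +
      ((UTree.setR2 T₁ T₂).card : ℝ) + ((UTree.setU T₁ T₂).card : ℝ) := by
  obtain ⟨s₁, hs₁⟩ := fullrefU_nonempty T₁
  obtain ⟨s₂, hs₂⟩ := fullrefU_nonempty T₂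
  have hB : (0:ℝ) ≤ ((UTree.setD T₁ T₂).card : ℝ) + ((UTree.setR1 T₁ T₂).card : ℝ) +
      ((UTree.setR2 T₁ T₂).card : ℝ) + ((UTree.setU T₁ T₂).card : ℝ) := by positivity
  apply max_le
  · apply Real.iSup_le _ hB
    rintro ⟨t₁, ht₁⟩
    exact ciInf_le_of_le ⟨0, by rintro x ⟨i, rfl⟩; exact quartetDist_nonneg _ _⟩
      ⟨s₂, hs₂⟩ (quartetDist_le ht₁ hs₂)
  · apply Real.iSup_le _ hB
    rintro ⟨t₂, ht₂⟩
    exact ciInf_le_of_le ⟨0, by rintro x ⟨i, rfl⟩; exact quartetDist_nonneg _ _⟩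
      ⟨s₁, hs₁⟩ (quartetDist_le hs₁ ht₂)

lemma unrooted_dHaus_ge (T₁ T₂ : UTree n) :
    ((UTree.setD T₁ T₂).card : ℝ) + (((UTree.setR1 T₁ T₂).card : ℝ) +
      ((UTree.setR2 T₁ T₂).card : ℝ)) / 3 ≤ UTree.dHaus T₁ T₂ := by
  haveI h1 : Nonempty ↥(T₁.FullRef) := (fullrefU_nonempty T₁).to_subtype
  haveI h2 : Nonempty ↥(T₂.FullRef) := (fullrefU_nonempty T₂).to_subtype
  haveI : Finite (UTree n) := Finite.of_fintype _
  obtain ⟨t₂, ht₂, hbound2⟩ := exists_t₂_adversaryU T₁ T₂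
  obtain ⟨t₁, ht₁, hbound1⟩ := exists_t₁_adversaryU T₁ T₂
  have hc2 : ((UTree.setD T₁ T₂).card : ℝ) + 2/3 * ((UTree.setR1 T₁ T₂).card : ℝ) ≤
      ⨆ t₂' : T₂.FullRef, ⨅ t₁' : T₁.FullRef, UTree.quartetDist t₁'.1 t₂'.1 := by
    apply le_ciSup_of_le (Set.Finite.bddAbove (Set.finite_range _)) ⟨t₂, ht₂⟩
    apply le_ciInf
    rintro ⟨t₁', ht₁'⟩
    have := hbound2 t₁' ht₁'
    linarith
  have hc1 : ((UTree.setD T₁ T₂).card : ℝ) + 2/3 * ((UTree.setR2 T₁ T₂).card : ℝ) ≤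
      ⨆ t₁' : T₁.FullRef, ⨅ t₂' : T₂.FullRef, UTree.quartetDist t₁'.1 t₂'.1 := by
    apply le_ciSup_of_le (Set.Finite.bddAbove (Set.finite_range _)) ⟨t₁, ht₁⟩
    apply le_ciInf
    rintro ⟨t₂', ht₂'⟩
    have := hbound1 t₂' ht₂'
    linarith
  rw [UTree.dHaus]
  have hm1 := le_max_left
    (⨆ t₁' : T₁.FullRef, ⨅ t₂' : T₂.FullRef, UTree.quartetDist t₁'.1 t₂'.1)
    (⨆ t₂' : T₂.FullRef, ⨅ t₁' : T₁.FullRef, UTree.quartetDist t₁'.1 t₂'.1)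
  have hm2 := le_max_right
    (⨆ t₁' : T₁.FullRef, ⨅ t₂' : T₂.FullRef, UTree.quartetDist t₁'.1 t₂'.1)
    (⨆ t₂' : T₂.FullRef, ⨅ t₁' : T₁.FullRef, UTree.quartetDist t₁'.1 t₂'.1)
  linarith

lemma unrooted_final {β p : ℝ} (hβ : 0 < β) (hp0 : 0 < p) (hp1 : p ≤ 1) (T₁ T₂ : UTree n)
    (hU : ((UTree.setU T₁ T₂).card : ℝ) ≤
      β * (((UTree.setD T₁ T₂).card : ℝ) + ((UTree.setR1 T₁ T₂).card : ℝ) +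
        ((UTree.setR2 T₁ T₂).card : ℝ))) :
    (1/3) * UTree.pdist p T₁ T₂ ≤ UTree.dHaus T₁ T₂ ∧
      UTree.dHaus T₁ T₂ ≤ ((1+β)/p) * UTree.pdist p T₁ T₂ := by
  have hD : (0:ℝ) ≤ ((UTree.setD T₁ T₂).card : ℝ) := Nat.cast_nonneg _
  have hR1 : (0:ℝ) ≤ ((UTree.setR1 T₁ T₂).card : ℝ) := Nat.cast_nonneg _
  have hR2 : (0:ℝ) ≤ ((UTree.setR2 T₁ T₂).card : ℝ) := Nat.cast_nonneg _
  have hUc : (0:ℝ) ≤ ((UTree.setU T₁ T₂).card : ℝ) := Nat.cast_nonneg _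
  have hpdist : UTree.pdist p T₁ T₂ = ((UTree.setD T₁ T₂).card : ℝ) +
      p * (((UTree.setR1 T₁ T₂).card : ℝ) + ((UTree.setR2 T₁ T₂).card : ℝ)) := rfl
  constructor
  · have hge := unrooted_dHaus_ge T₁ T₂
    rw [hpdist]
    nlinarith
  · have hle := unrooted_dHaus_le T₁ T₂
    rw [hpdist, div_mul_eq_mul_div, le_div_iff₀ hp0]
    have hS : UTree.dHaus T₁ T₂ ≤ (1+β) * (((UTree.setD T₁ T₂).card : ℝ) +
        ((UTree.setR1 T₁ T₂).card : ℝ) + ((UTree.setR2 T₁ T₂).card : ℝ)) := by nlinarith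
    have h2 := mul_le_mul_of_nonneg_right hS (le_of_lt hp0)
    have h3' : (0:ℝ) ≤ ((UTree.setD T₁ T₂).card : ℝ) * (1 - p) :=
      mul_nonneg hD (by linarith)
    have h3 : (0:ℝ) ≤ (1+β) * (((UTree.setD T₁ T₂).card : ℝ) -
        p * ((UTree.setD T₁ T₂).card : ℝ)) := by nlinarith
    nlinarith

end UnrootedHaus
/-- **Theorem.**  Let `β > 0`.  For every `p ∈ (0,1]`, the Hausdorff triplet
(resp. quartet) distance and the parametric distance `d⁽ᵖ⁾` are equivalent when
restricted to pairs `(T₁,T₂)` with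
`|U(T₁,T₂)| ≤ β·(|D(T₁,T₂)| + |R₁(T₁,T₂)| + |R₂(T₁,T₂)|)`: there are constants
`c₁, c₂ > 0`, depending only on `p` and `β`, with
`c₁·d⁽ᵖ⁾(T₁,T₂) ≤ d_Haus(T₁,T₂) ≤ c₂·d⁽ᵖ⁾(T₁,T₂)` for all such pairs. -/
theorem hausdorff_equivalent_parametric (β : ℝ) (hβ : 0 < β)
    (p : ℝ) (hp0 : 0 < p) (hp1 : p ≤ 1) :
    ∃ c₁ c₂ : ℝ, 0 < c₁ ∧ 0 < c₂ ∧
      (∀ (n : ℕ) (T₁ T₂ : RTree n),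
        ((RTree.setU T₁ T₂).card : ℝ) ≤
            β * (((RTree.setD T₁ T₂).card : ℝ) + ((RTree.setR1 T₁ T₂).card : ℝ) +
              ((RTree.setR2 T₁ T₂).card : ℝ)) →
          c₁ * RTree.pdist p T₁ T₂ ≤ RTree.dHaus T₁ T₂ ∧
            RTree.dHaus T₁ T₂ ≤ c₂ * RTree.pdist p T₁ T₂) ∧
      ∀ (n : ℕ) (T₁ T₂ : UTree n),
        ((UTree.setU T₁ T₂).card : ℝ) ≤
            β * (((UTree.setD T₁ T₂).card : ℝ) + ((UTree.setR1 T₁ T₂).card : ℝ) +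
              ((UTree.setR2 T₁ T₂).card : ℝ)) →
          c₁ * UTree.pdist p T₁ T₂ ≤ UTree.dHaus T₁ T₂ ∧
            UTree.dHaus T₁ T₂ ≤ c₂ * UTree.pdist p T₁ T₂ := by
  refine ⟨1/3, (1+β)/p, by norm_num, by positivity, ?_, ?_⟩
  · intro n T₁ T₂ hU
    exact rooted_final hβ hp0 hp1 T₁ T₂ hU
  · intro n T₁ T₂ hU
    exact unrooted_final hβ hp0 hp1 T₁ T₂ hU
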